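/- arXiv:1207.6923 — 10 statements merged into one kernel-verified Lean document; each statement's English description precedes it below -/
import Mathlib

section
/- Let S be a 0-F-inverse semigroup, G a group, and σ : S^× → G a morphism that is injective on the set M(S) of maximal elements of (S^×, ≤). Then σ is idempotent pure, i.e. σ(s) = 1 implies that s is an idempotent. -/
/-- An inverse semigroup structure on a semigroup with zero: `star s` is the unique
generalized inverse of `s`. -/
structure IsInvSemigroup (S : Type*) [SemigroupWithZero S] (star : S → S) : Prop where
  mul_star_mul : ∀ s : S, s * star s * s = s
  star_mul_star : ∀ s : S, star s * s * star s = star s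
  star_unique : ∀ s t : S, s * t * s = s → t * s * t = t → t = star s

/-- `e` belongs to the semilattice of idempotents `E(S) = {s s* : s ∈ S}`. -/
def IsIdemE {S : Type*} [SemigroupWithZero S] (star : S → S) (e : S) : Prop :=
  ∃ x : S, e = x * star x

/-- The natural partial order on an inverse semigroup: `s ≤ t` iff `s = e t` for some
idempotent `e`. -/
def natLe {S : Type*} [SemigroupWithZero S] (star : S → S) (s t : S) : Prop :=
  ∃ e : S, IsIdemE star e ∧ s = e * t

/-- `m` is a maximal element of `(S^×, ≤)`. -/
def IsMaxNonzero {S : Type*} [SemigroupWithZero S] (star : S → S) (m : S) : Prop :=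
  m ≠ 0 ∧ ∀ t : S, t ≠ 0 → natLe star m t → t = m

/-- `S` is `0`-`F`-inverse: every nonzero element lies beneath a unique maximal element
of `(S^×, ≤)`. -/
def ZeroFInverse {S : Type*} [SemigroupWithZero S] (star : S → S) : Prop :=
  ∀ s : S, s ≠ 0 → ∃! m : S, IsMaxNonzero star m ∧ natLe star s m

/-- A morphism (grading) `σ : S^× → G`: `σ(st) = σ(s)σ(t)` whenever `st ≠ 0`. -/
def IsGrading {S : Type*} [SemigroupWithZero S] {G : Type*} [Group G] (σ : S → G) : Prop :=
  ∀ s t : S, s ≠ 0 → t ≠ 0 → s * t ≠ 0 → σ (s * t) = σ s * σ t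

section Aux
variable {S : Type*} [SemigroupWithZero S] {star : S → S}

lemma idemE_mul_self (hinv : IsInvSemigroup S star) {e : S} (he : IsIdemE star e) :
    e * e = e := by
  obtain ⟨x, rfl⟩ := he
  have h := hinv.star_mul_star x
  calc x * star x * (x * star x) = x * (star x * x * star x) := by simp [mul_assoc]
    _ = x * star x := by rw [h]

lemma star_of_idem (hinv : IsInvSemigroup S star) {e : S} (he : e * e = e) :
    star e = e :=
  (hinv.star_unique e e (by rw [he, he]) (by rw [he, he])).symm

lemma idem_mul_idem (hinv : IsInvSemigroup S star) {e f : S}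
    (he : e * e = e) (hf : f * f = f) : (e * f) * (e * f) = e * f := by
  set a := star (e * f) with ha
  have h1 := hinv.mul_star_mul (e * f)
  have h2 := hinv.star_mul_star (e * f)
  rw [← ha] at h1 h2
  have he1 : ∀ x : S, e * (e * x) = e * x := fun x => by rw [← mul_assoc, he]
  have hf1 : ∀ x : S, f * (f * x) = f * x := fun x => by rw [← mul_assoc, hf]
  have h2e : ∀ x : S, a * (e * (f * (a * x))) = a * x := fun x => by
    simp only [← mul_assoc]
    simp only [← mul_assoc] at h2
    rw [h2]
  have k1 : (e * f) * (f * (a * e)) * (e * f) = e * f := by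
    simp only [mul_assoc]
    rw [hf1, he1]
    simpa only [mul_assoc] using h1
  have k2 : (f * (a * e)) * (e * f) * (f * (a * e)) = f * (a * e) := by
    simp only [mul_assoc]
    rw [he1, hf1, h2e]
  have hae : f * (a * e) = a := hinv.star_unique (e * f) (f * (a * e)) k1 k2
  have haidem : a * a = a := by
    have h3 : (f * (a * e)) * (f * (a * e)) = f * (a * e) := by
      simp only [mul_assoc]
      rw [h2e]
    rw [hae] at h3
    exact h3
  have hefa : e * f = star a :=
    hinv.star_unique a (e * f) h2 h1
  rw [hefa, star_of_idem hinv haidem, haidem]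

lemma idem_comm (hinv : IsInvSemigroup S star) {e f : S}
    (he : e * e = e) (hf : f * f = f) : e * f = f * e := by
  have hef := idem_mul_idem hinv he hf
  have hfe := idem_mul_idem hinv hf he
  have he1 : ∀ x : S, e * (e * x) = e * x := fun x => by rw [← mul_assoc, he]
  have hf1 : ∀ x : S, f * (f * x) = f * x := fun x => by rw [← mul_assoc, hf]
  have k1 : (e * f) * (f * e) * (e * f) = e * f := by
    simp only [mul_assoc]
    rw [hf1, he1]
    simpa only [mul_assoc] using hef
  have k2 : (f * e) * (e * f) * (f * e) = f * e := by
    simp only [mul_assoc]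
    rw [he1, hf1]
    simpa only [mul_assoc] using hfe
  have := hinv.star_unique (e * f) (f * e) k1 k2
  rw [this, star_of_idem hinv hef]

/-- if s ≤ t then s = (s s*) t -/
lemma natLe_eq (hinv : IsInvSemigroup S star) {s t : S} (h : natLe star s t) :
    s = (s * star s) * t := by
  obtain ⟨e, heE, rfl⟩ := h
  have he : e * e = e := idemE_mul_self hinv heE
  set u := t * star t with hudef
  have hu : u * u = u := idemE_mul_self hinv ⟨t, rfl⟩
  have hut : u * t = t := hinv.mul_star_mul t
  have hcomm : e * u = u * e := idem_comm hinv he hu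
  have he1 : ∀ x : S, e * (e * x) = e * x := fun x => by rw [← mul_assoc, he]
  have hcomm1 : ∀ x : S, e * (u * x) = u * (e * x) := fun x => by
    rw [← mul_assoc, hcomm, mul_assoc]
  have hu' : ∀ x : S, t * (star t * x) = u * x := fun x => by rw [hudef, mul_assoc]
  have hst1 : ∀ x : S, star t * (t * (star t * x)) = star t * x := fun x => by
    simp only [← mul_assoc]
    rw [hinv.star_mul_star t]
  have hst : star (e * t) = star t * e := by
    refine (hinv.star_unique (e * t) (star t * e) ?_ ?_).symm
    · simp only [mul_assoc]
      rw [he1, hu', hcomm1, he1, ← hcomm1, hut]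
    · simp only [mul_assoc]
      rw [he1, hu', hcomm1, he, ← hu', hst1]
  rw [hst]
  symm
  simp only [mul_assoc]
  rw [hu', hcomm1, he1, ← hcomm1, hut]

end Aux

/-- if `S` is a `0`-`F`-inverse semigroup and `σ : S^× → G` is a morphism that
is injective on the set of maximal elements of `(S^×, ≤)`, then `σ` is idempotent pure. -/
theorem stmt0 {S G : Type*} [SemigroupWithZero S] [Group G] (star : S → S)
    (hinv : IsInvSemigroup S star) (hF : ZeroFInverse star)
    (σ : S → G) (hσ : IsGrading σ)
    (hinj : ∀ m m' : S, IsMaxNonzero star m → IsMaxNonzero star m' → σ m = σ m' → m = m') :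
    ∀ s : S, s ≠ 0 → σ s = 1 → IsIdemE star s := by
  -- σ of a nonzero idempotent is 1
  have sigma_idem : ∀ e : S, e * e = e → e ≠ 0 → σ e = 1 := by
    intro e he hne
    have h := hσ e e hne hne (by rw [he]; exact hne)
    rw [he] at h
    have : σ e * 1 = σ e * σ e := by rw [mul_one]; exact h
    exact (mul_left_cancel this).symm
  -- σ is constant along ≤ (on nonzero elements)
  have sigma_le : ∀ s t : S, s ≠ 0 → natLe star s t → σ s = σ t := by
    intro s t hs hle
    obtain ⟨f, hfE, hsf⟩ := hle
    have hf : f * f = f := idemE_mul_self hinv hfE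
    have hfne : f ≠ 0 := by rintro rfl; rw [zero_mul] at hsf; exact hs hsf
    have htne : t ≠ 0 := by rintro rfl; rw [mul_zero] at hsf; exact hs hsf
    have := hσ f t hfne htne (by rw [← hsf]; exact hs)
    rw [← hsf, sigma_idem f hf hfne, one_mul] at this
    exact this
  intro s hs hσs
  -- the idempotent e = s s*
  set e := s * star s with hedef
  have hes : e * s = s := hinv.mul_star_mul s
  have hene : e ≠ 0 := by rintro h; rw [h, zero_mul] at hes; exact hs hes.symm
  have he : e * e = e := idemE_mul_self hinv ⟨s, rfl⟩
  -- maximal elements above s and above e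
  obtain ⟨m, ⟨hmmax, hsm⟩, -⟩ := hF s hs
  obtain ⟨n, ⟨hnmax, hen⟩, -⟩ := hF e hene
  have hσm : σ m = 1 := by rw [← sigma_le s m hs hsm]; exact hσs
  have hσn : σ n = 1 := by
    rw [← sigma_le e n hene hen]; exact sigma_idem e he hene
  have hmn : m = n := hinj m n hmmax hnmax (by rw [hσm, hσn])
  -- s = (s s*) m and e = e m, hence s = e
  have h1 : s = e * m := by rw [hedef]; exact natLe_eq hinv hsm
  have h2 : e = e * m := by
    have := natLe_eq hinv hen
    rwa [star_of_idem hinv he, he, ← hmn] at this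
  rw [← h2] at h1
  exact ⟨s, by rw [← hedef, ← h1]⟩
end

section
/- Let S be an inverse semigroup with zero, G a group, and σ : S^× → G a morphism such that for every g ∈ G the set σ⁻¹(g), whenever nonempty, has a greatest element with respect to the natural partial order. Then S is 0-F-inverse: every element of S^× lies beneath a unique maximal element of (S^×, ≤). -/
section Aux
variable {S : Type*} [SemigroupWithZero S] {star : S → S}

lemma myStarInvol (h : IsInvSemigroup S star) (s : S) : star (star s) = s :=
  (h.star_unique (star s) s (h.star_mul_star s) (h.mul_star_mul s)).symm

lemma myStarIdem (h : IsInvSemigroup S star) {p : S} (hp : p * p = p) : star p = p :=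
  (h.star_unique p p (by rw [hp, hp]) (by rw [hp, hp])).symm

lemma myIdemOfE (h : IsInvSemigroup S star) {e : S} (he : IsIdemE star e) : e * e = e := by
  obtain ⟨x, rfl⟩ := he
  calc x * star x * (x * star x) = x * star x * x * star x := by rw [mul_assoc (x * star x)]
    _ = x * star x := by rw [h.mul_star_mul]

lemma myProdIdem (h : IsInvSemigroup S star) {e f : S} (he : e * e = e) (hf : f * f = f) :
    (e * f) * (e * f) = e * f := by
  have he2 : ∀ x : S, e * (e * x) = e * x := fun x => by rw [← mul_assoc, he]
  have hf2 : ∀ x : S, f * (f * x) = f * x := fun x => by rw [← mul_assoc, hf]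
  have hmsm1 : e * (f * (star (e * f) * (e * f))) = e * f := by
    simpa only [mul_assoc] using h.mul_star_mul (e * f)
  have hsms2 : ∀ x : S, star (e * f) * (e * (f * (star (e * f) * x))) = star (e * f) * x :=
    fun x => by
      simpa only [mul_assoc] using congrArg (fun y => y * x) (h.star_mul_star (e * f))
  have hy : f * star (e * f) * e = star (e * f) := by
    apply h.star_unique
    · show (e * f) * (f * star (e * f) * e) * (e * f) = e * f
      simp only [mul_assoc, hf2, he2, hmsm1]
    · show (f * star (e * f) * e) * (e * f) * (f * star (e * f) * e) = f * star (e * f) * e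
      simp only [mul_assoc, he2, hf2, hsms2]
  have hsa : star (e * f) * star (e * f) = star (e * f) := by
    calc star (e * f) * star (e * f)
        = (f * star (e * f) * e) * (f * star (e * f) * e) := by rw [hy]
      _ = f * (star (e * f) * (e * (f * (star (e * f) * e)))) := by simp only [mul_assoc]
      _ = f * (star (e * f) * e) := by rw [hsms2]
      _ = f * star (e * f) * e := by rw [mul_assoc]
      _ = star (e * f) := hy
  have haa : e * f = star (e * f) :=
    (myStarInvol h (e * f)).symm.trans (myStarIdem h hsa)
  rw [haa]; exact hsa

lemma myIdemComm (h : IsInvSemigroup S star) {e f : S} (he : e * e = e) (hf : f * f = f) :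
    e * f = f * e := by
  have hef := myProdIdem h he hf
  have hfe := myProdIdem h hf he
  have he2 : ∀ x : S, e * (e * x) = e * x := fun x => by rw [← mul_assoc, he]
  have hf2 : ∀ x : S, f * (f * x) = f * x := fun x => by rw [← mul_assoc, hf]
  have hef1 : e * (f * (e * f)) = e * f := by simpa only [mul_assoc] using hef
  have hfe1 : f * (e * (f * e)) = f * e := by simpa only [mul_assoc] using hfe
  have h1 : f * e = star (e * f) := by
    apply h.star_unique
    · show (e * f) * (f * e) * (e * f) = e * f
      simp only [mul_assoc, hf2, he2, hef1]
    · show (f * e) * (e * f) * (f * e) = f * e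
      simp only [mul_assoc, he2, hf2, hfe1]
  rw [h1, myStarIdem h hef]

lemma myNatLeChar (h : IsInvSemigroup S star) {s t : S} (hst : natLe star s t) :
    s = s * star s * t := by
  obtain ⟨e, heE, rfl⟩ := hst
  have he : e * e = e := myIdemOfE h heE
  have htt : (t * star t) * (t * star t) = t * star t := by
    simpa only [mul_assoc] using myIdemOfE h ⟨t, rfl⟩
  have hcomm : e * (t * star t) = (t * star t) * e := myIdemComm h he htt
  have hy : star t * e = star (e * t) := by
    apply h.star_unique
    · show (e * t) * (star t * e) * (e * t) = e * t
      calc (e * t) * (star t * e) * (e * t)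
          = e * (t * star t) * (e * e) * t := by simp only [mul_assoc]
        _ = e * (t * star t) * e * t := by rw [he]
        _ = (t * star t) * e * e * t := by rw [hcomm]
        _ = (t * star t) * (e * e) * t := by simp only [mul_assoc]
        _ = (t * star t) * e * t := by rw [he]
        _ = e * (t * star t) * t := by rw [hcomm]
        _ = e * (t * star t * t) := by simp only [mul_assoc]
        _ = e * t := by rw [h.mul_star_mul]
    · show (star t * e) * (e * t) * (star t * e) = star t * e
      calc (star t * e) * (e * t) * (star t * e)
          = star t * (e * e) * (t * star t) * e := by simp only [mul_assoc]
        _ = star t * e * (t * star t) * e := by rw [he]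
        _ = star t * (e * (t * star t)) * e := by rw [mul_assoc (star t) e]
        _ = star t * ((t * star t) * e) * e := by rw [hcomm]
        _ = star t * (t * star t) * (e * e) := by simp only [mul_assoc]
        _ = star t * t * star t * e := by rw [he]; simp only [mul_assoc]
        _ = star t * e := by rw [h.star_mul_star]
  have key : (e * t) * (star t * e) * t = e * t := by
    calc (e * t) * (star t * e) * t
        = e * (t * star t) * (e * t) := by simp only [mul_assoc]
      _ = (t * star t) * e * (e * t) := by rw [hcomm]
      _ = (t * star t) * (e * e) * t := by simp only [mul_assoc]
      _ = (t * star t) * e * t := by rw [he]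
      _ = e * (t * star t) * t := by rw [hcomm]
      _ = e * (t * star t * t) := by simp only [mul_assoc]
      _ = e * t := by rw [h.mul_star_mul]
  rw [hy] at key
  exact key.symm

lemma myNatLeRefl (h : IsInvSemigroup S star) (s : S) : natLe star s s :=
  ⟨s * star s, ⟨s, rfl⟩, (h.mul_star_mul s).symm⟩

lemma myNatLeAntisymm (h : IsInvSemigroup S star) {s t : S}
    (hst : natLe star s t) (hts : natLe star t s) : s = t := by
  have h1 : s = s * star s * t := myNatLeChar h hst
  have h2 : t = t * star t * s := myNatLeChar h hts
  have hss : (s * star s) * (s * star s) = s * star s := myIdemOfE h ⟨s, rfl⟩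
  have htt : (t * star t) * (t * star t) = t * star t := myIdemOfE h ⟨t, rfl⟩
  have hcomm : (s * star s) * (t * star t) = (t * star t) * (s * star s) :=
    myIdemComm h hss htt
  calc s = s * star s * t := h1
    _ = s * star s * (t * star t * s) := by rw [← h2]
    _ = (s * star s) * (t * star t) * s := by simp only [mul_assoc]
    _ = (t * star t) * (s * star s) * s := by rw [hcomm]
    _ = (t * star t) * (s * star s * s) := by simp only [mul_assoc]
    _ = t * star t * s := by rw [h.mul_star_mul]
    _ = t := h2.symm

lemma mySigmaEqOfLe {G : Type*} [Group G] (h : IsInvSemigroup S star)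
    {σ : S → G} (hσ : IsGrading σ) {a b : S} (ha : a ≠ 0) (hb : b ≠ 0)
    (hab : natLe star a b) : σ a = σ b := by
  obtain ⟨e, heE, hEq⟩ := hab
  have he : e * e = e := myIdemOfE h heE
  have he0 : e ≠ 0 := by rintro rfl; exact ha (hEq.trans (zero_mul b))
  have heb : e * b ≠ 0 := hEq ▸ ha
  have h1 : σ e = σ e * σ e := by
    conv_lhs => rw [← he]
    exact hσ e e he0 he0 (he.symm ▸ he0)
  have h2 : σ e = 1 := mul_eq_right.mp h1.symm
  rw [hEq, hσ e b he0 hb heb, h2, one_mul]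

end Aux

/-- if `σ : S^× → G` is a morphism such that every nonempty fibre `σ⁻¹(g)`
has a greatest element with respect to the natural partial order, then `S` is
`0`-`F`-inverse. -/
theorem stmt1 {S G : Type*} [SemigroupWithZero S] [Group G] (star : S → S)
    (hinv : IsInvSemigroup S star)
    (σ : S → G) (hσ : IsGrading σ)
    (hgreatest : ∀ g : G, (∃ s : S, s ≠ 0 ∧ σ s = g) →
      ∃ m : S, m ≠ 0 ∧ σ m = g ∧ ∀ s : S, s ≠ 0 → σ s = g → natLe star s m) :
    ZeroFInverse star := by
  intro s hs
  obtain ⟨m, hm0, hσm, hmax⟩ := hgreatest (σ s) ⟨s, hs, rfl⟩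
  have hsm : natLe star s m := hmax s hs rfl
  have hmaxm : IsMaxNonzero star m := by
    refine ⟨hm0, fun t ht hmt => ?_⟩
    have hσt : σ t = σ s := (mySigmaEqOfLe hinv hσ hm0 ht hmt).symm.trans hσm
    exact myNatLeAntisymm hinv (hmax t ht hσt) hmt
  refine ⟨m, ⟨hmaxm, hsm⟩, ?_⟩
  rintro m' ⟨hm', hsm'⟩
  have hσm' : σ m' = σ s := (mySigmaEqOfLe hinv hσ hs hm'.1 hsm').symm
  exact (hm'.2 m hm0 (hmax m' hm'.1 hσm')).symm
end

section
/- Let Y be a locally compact Hausdorff space, X ⊆ Y an open subspace that is totally disconnected, and let a group G act on Y by homeomorphisms with ⋃_{g∈G} g·X = Y. Let J be a collection of nonempty compact open subsets of X such that (g·p) ∩ X ∈ J ∪ {∅} for every p ∈ J and g ∈ G, and set W = {g·p : g ∈ G, p ∈ J}. If J is independent, then W is independent. -/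
open Set Pointwise

/-- A family `V` of (nonempty compact open) sets is independent if whenever a member `U`
is a finite union of members `U₁, …, Uₙ`, then `U = U_j` for some `j`. -/
def IndepFam {Y : Type*} (V : Set (Set Y)) : Prop :=
  ∀ (U : Set Y) (n : ℕ) (Us : Fin n → Set Y), U ∈ V → (∀ i, Us i ∈ V) →
    U = ⋃ i, Us i → ∃ j, U = Us j

/-- `Y` locally compact Hausdorff, `X ⊆ Y` open and totally disconnected,
`G` acting on `Y` by homeomorphisms with `⋃ g, g • X = Y`, and `J` a family of nonempty
compact open subsets of `X` with `(g • p) ∩ X ∈ J ∪ {∅}` for `p ∈ J`, `g ∈ G`.  If `J` is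
independent, then so is `W = {g • p : g ∈ G, p ∈ J}`. -/
theorem stmt4 {Y G : Type*} [TopologicalSpace Y] [LocallyCompactSpace Y] [T2Space Y]
    [Group G] [MulAction G Y] [ContinuousConstSMul G Y]
    (X : Set Y) (hX : IsOpen X)
    (hXtd : ∀ U : Set Y, U ⊆ X → IsOpen U → ∀ x ∈ U,
      ∃ K : Set Y, IsCompact K ∧ IsOpen K ∧ x ∈ K ∧ K ⊆ U)
    (hcover : ⋃ g : G, g • X = univ)
    (J : Set (Set Y)) (hJ : ∀ p ∈ J, p ⊆ X ∧ IsCompact p ∧ IsOpen p ∧ p.Nonempty)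
    (hJinv : ∀ p ∈ J, ∀ g : G, (g • p) ∩ X ∈ J ∨ (g • p) ∩ X = ∅)
    (hJind : IndepFam J) :
    IndepFam {w : Set Y | ∃ g : G, ∃ p ∈ J, w = g • p} := by
  intro U n Us hU hUs hUnion
  obtain ⟨g, p, hpJ, rfl⟩ := hU
  choose gs ps hps hUs_eq using hUs
  set h : Fin n → G := fun i => g⁻¹ * gs i with hh
  have hp : p = ⋃ i, h i • ps i := by
    have h1 : g⁻¹ • (g • p) = g⁻¹ • ⋃ i, Us i := congrArg (g⁻¹ • ·) hUnion
    rw [inv_smul_smul, smul_set_iUnion] at h1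
    rw [h1]
    refine iUnion_congr fun i => ?_
    rw [hUs_eq i, smul_smul]
  obtain ⟨hpX, hpc, hpo, hpne⟩ := hJ p hpJ
  have hkey : ∀ k : Fin n, (h k • ps k) ∩ X ⊆ p := fun k => by
    rw [hp]; exact inter_subset_left.trans (subset_iUnion (fun i => h i • ps i) k)
  have hSne : ∃ i, ((h i • ps i) ∩ X).Nonempty := by
    obtain ⟨x, hx⟩ := hpne
    have hxX : x ∈ X := hpX hx
    rw [hp] at hx
    obtain ⟨i, hxi⟩ := mem_iUnion.mp hx
    exact ⟨i, x, hxi, hxX⟩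
  obtain ⟨i₀, hi₀⟩ := hSne
  classical
  set Qs : Fin n → Set Y :=
    fun i => if ((h i • ps i) ∩ X).Nonempty then (h i • ps i) ∩ X
      else (h i₀ • ps i₀) ∩ X with hQs
  have hQJ : ∀ i, Qs i ∈ J := by
    intro i
    by_cases hc : ((h i • ps i) ∩ X).Nonempty
    · simp only [hQs, if_pos hc]
      rcases hJinv (ps i) (hps i) (h i) with h1 | h1
      · exact h1
      · exact absurd h1 hc.ne_empty
    · simp only [hQs, if_neg hc]
      rcases hJinv (ps i₀) (hps i₀) (h i₀) with h1 | h1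
      · exact h1
      · exact absurd h1 hi₀.ne_empty
  have hsub : ∀ i, Qs i ⊆ p := by
    intro i
    by_cases hc : ((h i • ps i) ∩ X).Nonempty
    · simp only [hQs, if_pos hc]; exact hkey i
    · simp only [hQs, if_neg hc]; exact hkey i₀
  have hpeq : p = ⋃ i, Qs i := by
    apply Subset.antisymm
    · intro x hx
      have hxX := hpX hx
      rw [hp] at hx
      obtain ⟨i, hxi⟩ := mem_iUnion.mp hx
      refine mem_iUnion.mpr ⟨i, ?_⟩
      have hne : ((h i • ps i) ∩ X).Nonempty := ⟨x, hxi, hxX⟩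
      simp only [hQs, if_pos hne]
      exact ⟨hxi, hxX⟩
    · exact iUnion_subset hsub
  obtain ⟨j, hj⟩ := hJind p n Qs hpJ hQJ hpeq
  -- extract index k with p = (h k • ps k) ∩ X
  have : ∃ k, p = (h k • ps k) ∩ X := by
    by_cases hc : ((h j • ps j) ∩ X).Nonempty
    · exact ⟨j, by simpa only [hQs, if_pos hc] using hj⟩
    · exact ⟨i₀, by simpa only [hQs, if_neg hc] using hj⟩
  obtain ⟨k, hk⟩ := this
  have hpk : p = h k • ps k := by
    apply Subset.antisymm
    · rw [hk]; exact inter_subset_left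
    · rw [hp]; exact subset_iUnion (fun i => h i • ps i) k
  refine ⟨k, ?_⟩
  rw [hUs_eq k, hpk, smul_smul, hh, mul_inv_cancel_left]
end

section
/- Let Y be a locally compact Hausdorff space, X ⊆ Y an open subspace that is totally disconnected, and let a group G act on Y by homeomorphisms with ⋃_{g∈G} g·X = Y. Let J be a collection of compact open subsets of X such that (g·p) ∩ X ∈ J ∪ {∅} for every p ∈ J and g ∈ G, and set W = {g·p : g ∈ G, p ∈ J}. If J is a generating family for the compact open subsets of X, then every member of W is compact open in Y, W is a generating family for the compact open subsets of Y, and Y is totally disconnected. -/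
open Set Pointwise

/-- The family generated by `V` under finite intersections, finite unions and set
differences (so `{A | GenFam V A}`, for `V` a family of compact open sets, is the
smallest family of compact open sets containing `V` and closed under these operations). -/
inductive GenFam {Y : Type*} (V : Set (Set Y)) : Set Y → Prop
  | base : ∀ U ∈ V, GenFam V U
  | inter : ∀ {A B : Set Y}, GenFam V A → GenFam V B → GenFam V (A ∩ B)
  | union : ∀ {A B : Set Y}, GenFam V A → GenFam V B → GenFam V (A ∪ B)
  | sdiff : ∀ {A B : Set Y}, GenFam V A → GenFam V B → GenFam V (A \ B)

/-- `Y` locally compact Hausdorff, `X ⊆ Y` open and totally disconnected,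
`G` acting on `Y` by homeomorphisms with `⋃ g, g • X = Y`, and `J` a family of compact
open subsets of `X` with `(g • p) ∩ X ∈ J ∪ {∅}` for `p ∈ J`, `g ∈ G`.  If `J` is a
generating family for the compact open subsets of `X`, then every member of
`W = {g • p : g ∈ G, p ∈ J}` is compact open in `Y`, `W` is a generating family for the
compact open subsets of `Y`, and `Y` is totally disconnected. -/
theorem stmt5 {Y G : Type*} [TopologicalSpace Y] [LocallyCompactSpace Y] [T2Space Y]
    [Group G] [MulAction G Y] [ContinuousConstSMul G Y]
    (X : Set Y) (hX : IsOpen X)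
    (hXtd : ∀ U : Set Y, U ⊆ X → IsOpen U → ∀ x ∈ U,
      ∃ K : Set Y, IsCompact K ∧ IsOpen K ∧ x ∈ K ∧ K ⊆ U)
    (hcover : ⋃ g : G, g • X = univ)
    (J : Set (Set Y)) (hJ : ∀ p ∈ J, p ⊆ X ∧ IsCompact p ∧ IsOpen p)
    (hJinv : ∀ p ∈ J, ∀ g : G, (g • p) ∩ X ∈ J ∨ (g • p) ∩ X = ∅)
    (hJgen : {A : Set Y | A ⊆ X ∧ IsCompact A ∧ IsOpen A} = {A : Set Y | GenFam J A}) :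
    (∀ w ∈ {w : Set Y | ∃ g : G, ∃ p ∈ J, w = g • p}, IsCompact w ∧ IsOpen w) ∧
    ({A : Set Y | IsCompact A ∧ IsOpen A} =
      {A : Set Y | GenFam {w : Set Y | ∃ g : G, ∃ p ∈ J, w = g • p} A}) ∧
    (∀ U : Set Y, IsOpen U → ∀ y ∈ U,
      ∃ K : Set Y, IsCompact K ∧ IsOpen K ∧ y ∈ K ∧ K ⊆ U) := by

  set W : Set (Set Y) := {w : Set Y | ∃ g : G, ∃ p ∈ J, w = g • p} with hWdef
  -- each member of W is compact open
  have hWco : ∀ w ∈ W, IsCompact w ∧ IsOpen w := by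
    rintro w ⟨g, p, hp, rfl⟩
    obtain ⟨hpX, hpc, hpo⟩ := hJ p hp
    refine ⟨?_, hpo.smul g⟩
    have : g • p = (fun x => g • x) '' p := rfl
    rw [this]
    exact hpc.image (continuous_const_smul g)
  -- GenFam J A → GenFam W (g • A)
  have hGenTrans : ∀ (g : G) (A : Set Y), GenFam J A → GenFam W (g • A) := by
    intro g A h
    induction h with
    | base U hU => exact GenFam.base _ ⟨g, U, hU, rfl⟩
    | inter h1 h2 ih1 ih2 => rw [smul_set_inter]; exact GenFam.inter ih1 ih2
    | union h1 h2 ih1 ih2 => rw [smul_set_union]; exact GenFam.union ih1 ih2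
    | sdiff h1 h2 ih1 ih2 => rw [smul_set_sdiff]; exact GenFam.sdiff ih1 ih2
  have hJmem : ∀ A : Set Y, A ⊆ X → IsCompact A → IsOpen A → GenFam J A := by
    intro A h1 h2 h3
    exact (Set.ext_iff.mp hJgen A).mp ⟨h1, h2, h3⟩
  have hGenEmpty : GenFam W (∅ : Set Y) := by
    have := hGenTrans 1 ∅ (hJmem ∅ (empty_subset X) isCompact_empty isOpen_empty)
    rwa [one_smul] at this
  -- key local construction
  have key : ∀ (A : Set Y), IsOpen A → ∀ a ∈ A,
      ∃ K : Set Y, IsCompact K ∧ IsOpen K ∧ GenFam W K ∧ a ∈ K ∧ K ⊆ A := by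
    intro A hAo a ha
    have hmem : a ∈ ⋃ g : G, g • X := by rw [hcover]; trivial
    obtain ⟨g, hg⟩ := mem_iUnion.mp hmem
    have hax : g⁻¹ • a ∈ g⁻¹ • (A ∩ g • X) := smul_mem_smul_set (mem_inter ha hg)
    have hU'X : g⁻¹ • (A ∩ g • X) ⊆ X := by
      rintro x ⟨y, ⟨-, hy2⟩, rfl⟩
      exact mem_smul_set_iff_inv_smul_mem.mp hy2
    have hU'o : IsOpen (g⁻¹ • (A ∩ g • X)) := (hAo.inter (hX.smul g)).smul g⁻¹
    obtain ⟨K, hKc, hKo, haK, hKU⟩ := hXtd _ hU'X hU'o (g⁻¹ • a) hax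
    refine ⟨g • K, ?_, hKo.smul g, ?_, ?_, ?_⟩
    · have : g • K = (fun x => g • x) '' K := rfl
      rw [this]; exact hKc.image (continuous_const_smul g)
    · exact hGenTrans g K (hJmem K (hKU.trans hU'X) hKc hKo)
    · exact mem_smul_set_iff_inv_smul_mem.mpr haK
    · intro y hy
      have h1 : g⁻¹ • y ∈ g⁻¹ • (A ∩ g • X) := hKU (mem_smul_set_iff_inv_smul_mem.mp hy)
      exact (smul_mem_smul_set_iff.mp h1).1
  -- forward direction of the generating statement
  have hfwd : ∀ A : Set Y, IsCompact A → IsOpen A → GenFam W A := by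
    intro A hAc hAo
    have key' : ∀ a ∈ A, ∃ K : Set Y, GenFam W K ∧ IsOpen K ∧ a ∈ K ∧ K ⊆ A := by
      intro a ha
      obtain ⟨K, _, h2, h3, h4, h5⟩ := key A hAo a ha
      exact ⟨K, h3, h2, h4, h5⟩
    choose! V hV1 hV2 hV3 hV4 using key'
    obtain ⟨t, ht⟩ := hAc.elim_finite_subcover (fun a : A => V ↑a)
      (fun a => hV2 a a.2) (fun x hx => mem_iUnion.mpr ⟨⟨x, hx⟩, hV3 x hx⟩)
    have hUnion : ∀ (t : Finset ↥A), GenFam W (⋃ i ∈ t, V ↑i) := by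
      intro t
      classical
      induction t using Finset.induction with
      | empty => simpa using hGenEmpty
      | insert _ _ hni ih =>
        rw [Finset.set_biUnion_insert]
        exact GenFam.union (hV1 _ (Subtype.coe_prop _)) ih
    have hAS : A = ⋃ i ∈ t, V ↑i :=
      Subset.antisymm ht (iUnion₂_subset fun i _ => hV4 _ i.2)
    rw [hAS]
    exact hUnion t
  have hbwd : ∀ A : Set Y, GenFam W A → IsCompact A ∧ IsOpen A := by
    intro A h
    induction h with
    | base U hU => exact hWco U hU
    | inter h1 h2 ih1 ih2 => exact ⟨ih1.1.inter ih2.1, ih1.2.inter ih2.2⟩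
    | union h1 h2 ih1 ih2 => exact ⟨ih1.1.union ih2.1, ih1.2.union ih2.2⟩
    | sdiff h1 h2 ih1 ih2 =>
      exact ⟨ih1.1.inter_right ih2.2.isClosed_compl, ih1.2.sdiff ih2.1.isClosed⟩
  refine ⟨hWco, ?_, ?_⟩
  · ext A
    exact ⟨fun h => hfwd A h.1 h.2, fun h => hbwd A h⟩
  · intro U hU y hy
    obtain ⟨K, h1, h2, _, h4, h5⟩ := key U hU y hy
    exact ⟨K, h1, h2, h4, h5⟩
end

section
/- Let E be a countable semilattice with zero, Ê its spectrum, and for e ∈ E let D_e = {φ ∈ Ê : φ(e) = 1}. For e ∈ E ∖ {0} and a finite subset Z ⊆ {f ∈ E : f ≤ e}, let D_{(e,Z)} = D_e ∖ ⋃_{z∈Z} D_z. Then each D_{(e,Z)} is a compact open subset of Ê, the collection T = {D_{(e,Z)} : e ∈ E ∖ {0}, Z ⊆ {f : f ≤ e} finite} is a basis for the topology of Ê, and every compact open subset of Ê is a finite union of elements of T ∪ {∅}. -/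
/-- A character on a semilattice `E` with zero (modelled as a meet-semilattice with bottom
element `⊥`): a nonzero semilattice homomorphism `φ : E → {0,1}` with `φ(0) = 0`, where
`{0,1}` is modelled by `Bool` under `&&`. -/
def IsCharL {E : Type*} [SemilatticeInf E] [OrderBot E] (φ : E → Bool) : Prop :=
  (∀ x y : E, φ (x ⊓ y) = (φ x && φ y)) ∧ φ ⊥ = false ∧ ∃ x : E, φ x = true

/-- The spectrum `Ê ⊆ {0,1}^E` of the semilattice `E`: the set of characters, with the
topology inherited from the product topology on `E → Bool`. -/
abbrev SpecL (E : Type*) [SemilatticeInf E] [OrderBot E] : Type _ :=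
  {φ : E → Bool // IsCharL φ}

/-- The set `D_e = {φ ∈ Ê : φ(e) = 1}`. -/
def DL {E : Type*} [SemilatticeInf E] [OrderBot E] (e : E) : Set (SpecL E) :=
  {φ : SpecL E | φ.1 e = true}

section Aux

variable {E : Type*} [SemilatticeInf E] [OrderBot E]

lemma charL_mono {φ : SpecL E} {x y : E} (h : x ≤ y) (hx : φ.1 x = true) : φ.1 y = true := by
  have := φ.2.1 x y
  rw [inf_eq_left.mpr h, hx] at this
  simpa using this.symm

lemma charL_inf' {φ : SpecL E} (s : Finset E) (hs : s.Nonempty) (h : ∀ x ∈ s, φ.1 x = true) :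
    φ.1 (s.inf' hs id) = true := by
  induction hs using Finset.Nonempty.cons_induction with
  | singleton a => simpa using h a (by simp)
  | cons a s ha hs ih =>
    have h1 : φ.1 a = true := h a (by simp)
    have h2 : φ.1 (s.inf' hs id) = true := ih fun x hx => h x (by simp [hx])
    rw [Finset.inf'_cons hs, φ.2.1, id_eq, h1, h2]; rfl

lemma isOpen_DL (e : E) : IsOpen (DL e) := by
  have hc : Continuous fun φ : SpecL E => φ.1 e := (continuous_apply e).comp continuous_subtype_val
  exact IsOpen.preimage hc (isOpen_discrete {true})

lemma isClosed_DL (e : E) : IsClosed (DL e) := by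
  have hc : Continuous fun φ : SpecL E => φ.1 e := (continuous_apply e).comp continuous_subtype_val
  exact IsClosed.preimage hc (isClosed_discrete {true})

lemma isOpen_DLdiff (e : E) (Z : Finset E) : IsOpen (DL e \ ⋃ z ∈ Z, DL z) := by
  refine (isOpen_DL e).sdiff ?_
  exact Set.Finite.isClosed_biUnion Z.finite_toSet fun z _ => isClosed_DL z

lemma isCompact_DLdiff (e : E) (Z : Finset E) : IsCompact (DL e \ ⋃ z ∈ Z, DL z) := by
  rw [Topology.IsEmbedding.subtypeVal.isCompact_iff]
  have himg : Subtype.val '' (DL e \ ⋃ z ∈ Z, DL z) =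
      {φ : E → Bool | (∀ x y : E, φ (x ⊓ y) = (φ x && φ y)) ∧ φ ⊥ = false ∧ φ e = true ∧
        ∀ z ∈ Z, φ z = false} := by
    ext ψ
    constructor
    · rintro ⟨φ, ⟨he, hz⟩, rfl⟩
      refine ⟨φ.2.1, φ.2.2.1, he, fun z hzZ => ?_⟩
      by_contra hfalse
      exact hz (Set.mem_biUnion hzZ (by simpa [DL] using hfalse))
    · rintro ⟨h1, h2, h3, h4⟩
      refine ⟨⟨ψ, h1, h2, e, h3⟩, ⟨h3, ?_⟩, rfl⟩
      intro hmem
      obtain ⟨z, hzZ, hz⟩ := Set.mem_iUnion₂.mp hmem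
      simp [DL, h4 z hzZ] at hz
  rw [himg]
  have hclosed : IsClosed {φ : E → Bool | (∀ x y : E, φ (x ⊓ y) = (φ x && φ y)) ∧ φ ⊥ = false ∧
      φ e = true ∧ ∀ z ∈ Z, φ z = false} := by
    have e1 : {φ : E → Bool | (∀ x y : E, φ (x ⊓ y) = (φ x && φ y)) ∧ φ ⊥ = false ∧
        φ e = true ∧ ∀ z ∈ Z, φ z = false} =
        (⋂ x : E, ⋂ y : E, {φ : E → Bool | φ (x ⊓ y) = (φ x && φ y)}) ∩
        {φ : E → Bool | φ ⊥ = false} ∩ {φ : E → Bool | φ e = true} ∩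
        (⋂ z ∈ Z, {φ : E → Bool | φ z = false}) := by
      ext φ; simp [Set.mem_iInter]; tauto
    rw [e1]
    refine (((isClosed_iInter fun x => isClosed_iInter fun y => ?_).inter ?_).inter ?_).inter
      (isClosed_biInter fun z _ => ?_)
    · exact isClosed_eq (continuous_apply _) (by fun_prop)
    · exact isClosed_eq (continuous_apply _) continuous_const
    · exact isClosed_eq (continuous_apply _) continuous_const
    · exact isClosed_eq (continuous_apply _) continuous_const
  exact hclosed.isCompact

lemma basisL : TopologicalSpace.IsTopologicalBasis
    {U : Set (SpecL E) | ∃ (e : E) (Z : Finset E), e ≠ ⊥ ∧ (∀ z ∈ Z, z ≤ e) ∧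
      U = DL e \ ⋃ z ∈ Z, DL z} := by
  classical
  refine TopologicalSpace.isTopologicalBasis_of_isOpen_of_nhds ?_ ?_
  · rintro U ⟨e, Z, _, _, rfl⟩
    exact isOpen_DLdiff e Z
  · intro φ U hφU hU
    obtain ⟨V, hV, rfl⟩ := isOpen_induced_iff.mp hU
    have hφV : φ.1 ∈ V := hφU
    obtain ⟨I, u, hu, hsub⟩ := isOpen_pi_iff.mp hV φ.1 hφV
    obtain ⟨x0, hx0⟩ := φ.2.2.2
    set P : Finset E := insert x0 (I.filter fun i => φ.1 i = true) with hP
    have hPne : P.Nonempty := ⟨x0, by simp [hP]⟩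
    have hPtrue : ∀ x ∈ P, φ.1 x = true := by
      intro x hx
      rcases Finset.mem_insert.mp hx with rfl | hx
      · exact hx0
      · exact (Finset.mem_filter.mp hx).2
    set e0 : E := P.inf' hPne id with he0
    have hφe0 : φ.1 e0 = true := charL_inf' P hPne hPtrue
    have he0bot : e0 ≠ ⊥ := fun h => by simp [h, φ.2.2.1] at hφe0
    set N : Finset E := I.filter fun i => φ.1 i = false with hN
    set Z : Finset E := N.image fun n => e0 ⊓ n with hZ
    refine ⟨DL e0 \ ⋃ z ∈ Z, DL z, ⟨e0, Z, he0bot, ?_, rfl⟩, ⟨hφe0, ?_⟩, ?_⟩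
    · intro z hz
      obtain ⟨n, _, rfl⟩ := Finset.mem_image.mp hz
      exact inf_le_left
    · intro hmem
      obtain ⟨z, hzZ, hz⟩ := Set.mem_iUnion₂.mp hmem
      obtain ⟨n, hnN, rfl⟩ := Finset.mem_image.mp hzZ
      have hnfalse : φ.1 n = false := (Finset.mem_filter.mp hnN).2
      have : φ.1 (e0 ⊓ n) = true := hz
      rw [φ.2.1, hφe0, hnfalse] at this
      simp at this
    · intro ψ ⟨hψe0, hψZ⟩
      have hagree : ∀ i ∈ I, ψ.1 i = φ.1 i := by
        intro i hi
        cases hb : φ.1 i with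
        | true =>
          have hiP : i ∈ P := Finset.mem_insert_of_mem (Finset.mem_filter.mpr ⟨hi, hb⟩)
          exact charL_mono (Finset.inf'_le id hiP) hψe0
        | false =>
          have hiN : i ∈ N := Finset.mem_filter.mpr ⟨hi, hb⟩
          have hznot : ψ.1 (e0 ⊓ i) ≠ true := by
            intro hc
            exact hψZ (Set.mem_biUnion (Finset.mem_image_of_mem _ hiN) hc)
          rw [ψ.2.1, hψe0] at hznot
          simpa using hznot
      have : ψ.1 ∈ (↑I : Set E).pi u := by
        intro i hi
        rw [hagree i hi]
        exact (hu i hi).2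
      exact hsub this
  
theorem compactOpen_decomp (K : Set (SpecL E)) (hK : IsCompact K) (hKo : IsOpen K) :
    ∃ (n : ℕ) (f : Fin n → Set (SpecL E)),
      (∀ i, f i ∈ {U : Set (SpecL E) | ∃ (e : E) (Z : Finset E), e ≠ ⊥ ∧
        (∀ z ∈ Z, z ≤ e) ∧ U = DL e \ ⋃ z ∈ Z, DL z}) ∧
      K = ⋃ i, f i := by
  have hbasis := (basisL (E := E))
  have hpt : ∀ φ : K, ∃ V, (∃ (e : E) (Z : Finset E), e ≠ ⊥ ∧ (∀ z ∈ Z, z ≤ e) ∧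
      V = DL e \ ⋃ z ∈ Z, DL z) ∧ (φ : SpecL E) ∈ V ∧ V ⊆ K := fun φ =>
    hbasis.exists_subset_of_mem_open φ.2 hKo
  choose V hVT hVmem hVsub using hpt
  have hcov : K ⊆ ⋃ φ : K, V φ := fun x hx => Set.mem_iUnion.mpr ⟨⟨x, hx⟩, hVmem ⟨x, hx⟩⟩
  have hopen : ∀ φ : K, IsOpen (V φ) := by
    intro φ
    obtain ⟨e, Z, _, _, hVEq⟩ := hVT φ
    rw [hVEq]; exact isOpen_DLdiff e Z
  obtain ⟨t, ht⟩ := hK.elim_finite_subcover V hopen hcov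
  refine ⟨t.card, fun i => V (t.equivFin.symm i), fun i => hVT _, ?_⟩
  apply Set.Subset.antisymm
  · intro x hx
    obtain ⟨φ, hφt, hφ⟩ := Set.mem_iUnion₂.mp (ht hx)
    exact Set.mem_iUnion.mpr ⟨t.equivFin ⟨φ, hφt⟩, by simpa using hφ⟩
  · intro x hx
    obtain ⟨i, hi⟩ := Set.mem_iUnion.mp hx
    exact hVsub _ hi

end Aux

/-- for a countable semilattice `E` with zero, each set
`D_{(e,Z)} = D_e ∖ ⋃_{z ∈ Z} D_z` (for `e ≠ 0` and `Z` a finite set of elements `≤ e`) is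
compact open in `Ê`, the collection `T` of all such sets is a basis for the topology of
`Ê`, and every compact open subset of `Ê` is a finite union of elements of `T ∪ {∅}`. -/
theorem stmt7 {E : Type*} [SemilatticeInf E] [OrderBot E] [Countable E] :
    (∀ e : E, e ≠ ⊥ → ∀ Z : Finset E, (∀ z ∈ Z, z ≤ e) →
      IsCompact (DL e \ ⋃ z ∈ Z, DL z) ∧ IsOpen (DL e \ ⋃ z ∈ Z, DL z)) ∧
    TopologicalSpace.IsTopologicalBasis
      {U : Set (SpecL E) | ∃ (e : E) (Z : Finset E), e ≠ ⊥ ∧ (∀ z ∈ Z, z ≤ e) ∧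
        U = DL e \ ⋃ z ∈ Z, DL z} ∧
    (∀ K : Set (SpecL E), IsCompact K → IsOpen K →
      ∃ (n : ℕ) (f : Fin n → Set (SpecL E)),
        (∀ i, f i ∈ {U : Set (SpecL E) | ∃ (e : E) (Z : Finset E), e ≠ ⊥ ∧
          (∀ z ∈ Z, z ≤ e) ∧ U = DL e \ ⋃ z ∈ Z, DL z}) ∧
        K = ⋃ i, f i) := by
  exact ⟨fun e _ Z _ => ⟨isCompact_DLdiff e Z, isOpen_DLdiff e Z⟩, basisL,
    fun K hK hKo => compactOpen_decomp K hK hKo⟩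
end

section
/- Let S be an inverse semigroup with zero whose semilattice of idempotents E is countable, and let s ∈ S^×. For a character φ on E with φ(s* s) = 1, define θ_s(φ) : E → {0,1} by θ_s(φ)(e) = φ(s* e s). Then θ_s(φ) is a character with θ_s(φ)(s s*) = 1; the map θ_s : D_{s*s} → D_{ss*} is a homeomorphism with inverse θ_{s*}; and for every e ∈ E one has θ_s(D_{s*s} ∩ D_e) = D_{s e s*}. -/
/-- A character on the semilattice of idempotents `E(S)`, modelled as a `Bool`-valued
function on `S` that is multiplicative on idempotents, nonzero, kills `0` and vanishes
off `E(S)` (the latter normalization identifies it with a function on `E(S)`). -/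
def IsCharSp {S : Type*} [SemigroupWithZero S] (star : S → S) (φ : S → Bool) : Prop :=
  (∀ e f : S, IsIdemE star e → IsIdemE star f → φ (e * f) = (φ e && φ f)) ∧
  φ 0 = false ∧ (∃ e : S, IsIdemE star e ∧ φ e = true) ∧
  ∀ s : S, ¬ IsIdemE star s → φ s = false

/-- The compact open set `D_e = {φ ∈ Ê : φ(e) = 1}`, inside the function space
`S → Bool` carrying the product topology. -/
def Dset {S : Type*} [SemigroupWithZero S] (star : S → S) (e : S) : Set (S → Bool) :=
  {φ : S → Bool | IsCharSp star φ ∧ φ e = true}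

open Classical in
/-- The map `θ_s`, given by `θ_s(φ)(e) = φ(s* e s)` for `e ∈ E(S)`. -/
noncomputable def theta {S : Type*} [SemigroupWithZero S] (star : S → S) (s : S)
    (φ : S → Bool) : S → Bool :=
  fun e => if IsIdemE star e then φ (star s * e * s) else false


section Helpers
variable {S : Type*} [SemigroupWithZero S] {star : S → S}

namespace IsInvSemigroup

variable (h : IsInvSemigroup S star)
include h

lemma star_star (s : S) : star (star s) = s :=
  (h.star_unique (star s) s (h.star_mul_star s) (h.mul_star_mul s)).symm

lemma idem_sq {e : S} (he : IsIdemE star e) : e * e = e := by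
  obtain ⟨x, rfl⟩ := he
  rw [← mul_assoc, h.mul_star_mul]

lemma star_of_sq {e : S} (he : e * e = e) : star e = e :=
  (h.star_unique e e (by rw [he, he]) (by rw [he, he])).symm

lemma idem_of_sq {e : S} (he : e * e = e) : IsIdemE star e :=
  ⟨e, by rw [h.star_of_sq he, he]⟩

omit h in
lemma idem_zero : IsIdemE star (0 : S) := ⟨0, (zero_mul _).symm⟩

-- right-assoc "tail" forms
lemma A1 (s : S) (x : S) : s * (star s * (s * x)) = s * x := by
  rw [← mul_assoc, ← mul_assoc, h.mul_star_mul]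

lemma A2 (s : S) : s * (star s * s) = s := by
  rw [← mul_assoc, h.mul_star_mul]

lemma B1 (s : S) (x : S) : star s * (s * (star s * x)) = star s * x := by
  rw [← mul_assoc, ← mul_assoc, h.star_mul_star]

lemma B2 (s : S) : star s * (s * star s) = star s := by
  rw [← mul_assoc, h.star_mul_star]

omit h in
lemma E1 {e : S} (he : e * e = e) (x : S) : e * (e * x) = e * x := by
  rw [← mul_assoc, he]

/-- the square of a product of two square-idempotents is itself -/
lemma sq_mul_sq {a b : S} (ha : a * a = a) (hb : b * b = b) :
    (a * b) * (a * b) = a * b := by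
  set c := star (a * b) with hc
  have h1 : a * (b * (c * (a * b))) = a * b := by
    simpa only [mul_assoc] using h.mul_star_mul (a * b)
  have h2 : c * (a * (b * c)) = c := by
    simpa only [mul_assoc] using h.star_mul_star (a * b)
  have h2' : ∀ x, c * (a * (b * (c * x))) = c * x := by
    intro x
    have := congrArg (· * x) h2
    simpa only [mul_assoc] using this
  -- g := b * (c * a) is an inverse of a * b
  have hg1 : (a * b) * (b * (c * a)) * (a * b) = a * b := by
    simp only [mul_assoc, E1 ha, E1 hb]
    exact h1
  have hg2 : (b * (c * a)) * (a * b) * (b * (c * a)) = b * (c * a) := by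
    simp only [mul_assoc, E1 ha, E1 hb]
    rw [h2' a]
  have hgc : b * (c * a) = c := h.star_unique (a * b) _ hg1 hg2
  have hcc : c * c = c := by
    rw [← hgc]; simp only [mul_assoc]; rw [h2' a]
  have hsc : star c = a * b := by rw [hc, h.star_star]
  have habc : a * b = c := by rw [← hsc, h.star_of_sq hcc]
  rw [habc]; exact hcc

lemma idem_comm {e f : S} (he : IsIdemE star e) (hf : IsIdemE star f) :
    e * f = f * e := by
  have he2 := h.idem_sq he
  have hf2 := h.idem_sq hf
  have hef := h.sq_mul_sq he2 hf2
  have hfe := h.sq_mul_sq hf2 he2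
  have h1 : (e * f) * (f * e) * (e * f) = e * f := by
    simp only [mul_assoc, E1 he2, E1 hf2]
    simpa only [mul_assoc] using hef
  have h2 : (f * e) * (e * f) * (f * e) = f * e := by
    simp only [mul_assoc, E1 he2, E1 hf2]
    simpa only [mul_assoc] using hfe
  have := h.star_unique (e * f) (f * e) h1 h2
  rw [this, h.star_of_sq hef]

lemma idem_comm1 {e f : S} (he : IsIdemE star e) (hf : IsIdemE star f) (x : S) :
    e * (f * x) = f * (e * x) := by
  rw [← mul_assoc, h.idem_comm he hf, mul_assoc]

omit h in
lemma idem_ss (s : S) : IsIdemE star (s * star s) := ⟨s, rfl⟩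

lemma idem_sts (s : S) : IsIdemE star (star s * s) := ⟨star s, by rw [h.star_star]⟩

lemma idem_comm_ss {e : S} (he : IsIdemE star e) (s x : S) :
    e * (s * (star s * x)) = s * (star s * (e * x)) := by
  simpa only [mul_assoc] using h.idem_comm1 he (idem_ss s) x

lemma idem_comm_sts {e : S} (he : IsIdemE star e) (s x : S) :
    e * (star s * (s * x)) = star s * (s * (e * x)) := by
  simpa only [mul_assoc] using h.idem_comm1 he (h.idem_sts s) x

lemma conj_idem {e : S} (he : IsIdemE star e) (s : S) :
    IsIdemE star (star s * e * s) := by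
  apply h.idem_of_sq
  have he2 := h.idem_sq he
  simp only [mul_assoc]
  rw [h.idem_comm_ss he s (e * s), h.B1, E1 he2]

lemma conj_mul {e : S} (he : IsIdemE star e) (s f : S) :
    (star s * e * s) * (star s * f * s) = star s * (e * f) * s := by
  simp only [mul_assoc]
  rw [h.idem_comm_ss he s (f * s), h.B1]

lemma conj_back {e : S} (he : IsIdemE star e) (s : S) :
    star s * (s * e * star s) * s = e * (star s * s) := by
  simp only [mul_assoc]
  rw [← h.idem_comm_sts he s (star s * s), h.B1]

omit h in
lemma theta_val {φ : S → Bool} {e : S} (he : IsIdemE star e) (s : S) :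
    theta star s φ e = φ (star s * e * s) := by
  simp only [theta]; rw [if_pos he]

omit h in
lemma theta_val_neg {φ : S → Bool} {e : S} (he : ¬ IsIdemE star e) (s : S) :
    theta star s φ e = false := by
  simp only [theta]; rw [if_neg he]

lemma theta_mem (s : S) (φ : S → Bool) (hφ : φ ∈ Dset star (star s * s)) :
    theta star s φ ∈ Dset star (s * star s) := by
  obtain ⟨⟨hmul, h0, _, hoff⟩, hval⟩ := hφ
  have key : theta star s φ (s * star s) = true := by
    rw [theta_val (idem_ss s) s]
    have heq : star s * (s * star s) * s = star s * s := by
      simp only [mul_assoc]; rw [h.B1]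
    rw [heq]; exact hval
  refine ⟨⟨?_, ?_, ⟨s * star s, idem_ss s, key⟩, fun t ht => theta_val_neg ht s⟩, key⟩
  · intro e f he hf
    have hef : IsIdemE star (e * f) := h.idem_of_sq (h.sq_mul_sq (h.idem_sq he) (h.idem_sq hf))
    rw [theta_val hef s, theta_val he s, theta_val hf s,
      ← hmul _ _ (h.conj_idem he s) (h.conj_idem hf s), h.conj_mul he s f]
  · rw [theta_val idem_zero s, mul_zero, zero_mul, h0]

lemma theta_theta (s : S) (φ : S → Bool) (hφ : φ ∈ Dset star (star s * s)) :
    theta star (star s) (theta star s φ) = φ := by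
  obtain ⟨⟨hmul, h0, hne, hoff⟩, hval⟩ := hφ
  funext e
  by_cases he : IsIdemE star e
  · rw [theta_val he (star s), h.star_star]
    have hses : IsIdemE star (s * e * star s) := by
      have := h.conj_idem he (star s); rwa [h.star_star] at this
    rw [theta_val hses s, h.conj_back he s, hmul e _ he (h.idem_sts s), hval, Bool.and_true]
  · rw [theta_val_neg he (star s), hoff e he]

lemma theta_image (s : S) {e : S} (he : IsIdemE star e) :
    theta star s '' (Dset star (star s * s) ∩ Dset star e) = Dset star (s * e * star s) := by
  have hidem : IsIdemE star (s * e * star s) := by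
    have := h.conj_idem he (star s); rwa [h.star_star] at this
  ext ψ
  constructor
  · rintro ⟨φ, ⟨⟨hchar, hval⟩, ⟨_, hvale⟩⟩, rfl⟩
    refine ⟨(h.theta_mem s φ ⟨hchar, hval⟩).1, ?_⟩
    rw [theta_val hidem s, h.conj_back he s, hchar.1 e _ he (h.idem_sts s), hvale, hval,
      Bool.and_self]
  · rintro ⟨hchar, hval⟩
    have hss : ψ (s * star s) = true := by
      have step : (s * e * star s) * (s * star s) = s * e * star s := by
        simp only [mul_assoc]; rw [h.B2]
      have hh := hchar.1 (s * e * star s) (s * star s) hidem (idem_ss s)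
      rw [step, hval] at hh
      simpa using hh.symm
    have h1 : ψ ∈ Dset star (star (star s) * star s) := by
      rw [h.star_star]; exact ⟨hchar, hss⟩
    have hm := h.theta_mem (star s) ψ h1
    rw [h.star_star] at hm
    have hDe : theta star (star s) ψ e = true := by
      rw [theta_val he (star s), h.star_star]; exact hval
    have h4 := h.theta_theta (star s) ψ h1
    rw [h.star_star] at h4
    exact ⟨theta star (star s) ψ, ⟨hm, hm.1, hDe⟩, h4⟩

omit h in
lemma theta_continuous (s : S) : Continuous (theta star s) := by
  apply continuous_pi
  intro e
  by_cases he : IsIdemE star e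
  · simp only [theta, if_pos he]
    exact continuous_apply _
  · simp only [theta, if_neg he]
    exact continuous_const

end IsInvSemigroup
end Helpers

/-- for `s ∈ S^×`, `θ_s(φ)` is a character with `θ_s(φ)(s s*) = 1` for each
character `φ` with `φ(s* s) = 1`; the map `θ_s : D_{s* s} → D_{s s*}` is a homeomorphism
with inverse `θ_{s*}`; and `θ_s(D_{s* s} ∩ D_e) = D_{s e s*}` for every `e ∈ E(S)`. -/
theorem stmt11 {S : Type*} [SemigroupWithZero S] (star : S → S)
    (hinv : IsInvSemigroup S star)
    (hcount : Countable {e : S // IsIdemE star e})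
    (s : S) (hs : s ≠ 0) :
    (∀ φ ∈ Dset star (star s * s), theta star s φ ∈ Dset star (s * star s)) ∧
    (∀ ψ ∈ Dset star (s * star s), theta star (star s) ψ ∈ Dset star (star s * s)) ∧
    (∀ φ ∈ Dset star (star s * s), theta star (star s) (theta star s φ) = φ) ∧
    (∀ ψ ∈ Dset star (s * star s), theta star s (theta star (star s) ψ) = ψ) ∧
    ContinuousOn (theta star s) (Dset star (star s * s)) ∧
    ContinuousOn (theta star (star s)) (Dset star (s * star s)) ∧
    (∀ e : S, IsIdemE star e →
      theta star s '' (Dset star (star s * s) ∩ Dset star e) = Dset star (s * e * star s)) := by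
  refine ⟨fun φ hφ => hinv.theta_mem s φ hφ, ?_, fun φ hφ => hinv.theta_theta s φ hφ, ?_,
    (IsInvSemigroup.theta_continuous s).continuousOn,
    (IsInvSemigroup.theta_continuous (star s)).continuousOn,
    fun e he => hinv.theta_image s he⟩
  · intro ψ hψ
    have h1 : ψ ∈ Dset star (star (star s) * star s) := by rw [hinv.star_star]; exact hψ
    have := hinv.theta_mem (star s) ψ h1
    rwa [hinv.star_star] at this
  · intro ψ hψ
    have h1 : ψ ∈ Dset star (star (star s) * star s) := by rw [hinv.star_star]; exact hψ
    have := hinv.theta_theta (star s) ψ h1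
    rwa [hinv.star_star] at this
end

section
/- Let P be a submonoid of a group G, and let I_P^λ be the left inverse hull of P. Then every nonzero f ∈ I_P^λ acts by a left translation: there exists a unique g ∈ G such that f(q) = g q for all q ∈ dom f. -/
open Classical

/-- The partial bijection `λ_p : P → pP`, `q ↦ p q`, of the submonoid `P` of a group. -/
noncomputable def lamPE {G : Type*} [Group G] (P : Submonoid G) (p : P) :
    PartialEquiv P P where
  toFun q := ⟨(p : G) * q, mul_mem p.2 q.2⟩
  invFun q := if h : ((p : G))⁻¹ * q ∈ P then ⟨((p : G))⁻¹ * q, h⟩ else 1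
  source := Set.univ
  target := {q : P | ((p : G))⁻¹ * q ∈ P}
  map_source' := by
    intro q _
    simp only [Set.mem_setOf_eq, inv_mul_cancel_left]
    exact q.2
  map_target' := by intro q _; trivial
  left_inv' := by
    intro q _
    have h : ((p : G))⁻¹ * (((⟨(p : G) * q, mul_mem p.2 q.2⟩ : P) : G)) ∈ P := by
      simp only [inv_mul_cancel_left]; exact q.2
    simp only [dif_pos h]
    ext
    simp [inv_mul_cancel_left]
  right_inv' := by
    intro q hq
    simp only [Set.mem_setOf_eq] at hq
    simp only [dif_pos hq]
    ext
    simp [mul_inv_cancel_left]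

/-- The empty partial bijection (the zero element of `I(P)`). -/
def emptyPE {G : Type*} [Group G] (P : Submonoid G) : PartialEquiv P P where
  toFun _ := 1
  invFun _ := 1
  source := ∅
  target := ∅
  map_source' := fun _ h => absurd h (Set.notMem_empty _)
  map_target' := fun _ h => absurd h (Set.notMem_empty _)
  left_inv' := fun _ h => absurd h (Set.notMem_empty _)
  right_inv' := fun _ h => absurd h (Set.notMem_empty _)

/-- The left inverse hull `I_P^λ` of `P`: the smallest collection of partial bijections of
`P` containing every `λ_p` and the empty map, closed under composition and inversion. -/
inductive LeftHull {G : Type*} [Group G] (P : Submonoid G) : PartialEquiv P P → Prop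
  | lam (p : P) : LeftHull P (lamPE P p)
  | zero : LeftHull P (emptyPE P)
  | comp {f f' : PartialEquiv P P} : LeftHull P f → LeftHull P f' → LeftHull P (f.trans f')
  | inv {f : PartialEquiv P P} : LeftHull P f → LeftHull P f.symm

theorem leftHull_exists_translation {G : Type*} [Group G] (P : Submonoid G)
    {f : PartialEquiv P P} (hf : LeftHull P f) :
    ∃ g : G, ∀ q ∈ f.source, ((f q : P) : G) = g * q := by
  induction hf with
  | lam p =>
      exact ⟨(p : G), fun q _ => rfl⟩
  | zero =>
      exact ⟨1, fun q hq => absurd hq (Set.notMem_empty _)⟩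
  | comp h1 h2 ih1 ih2 =>
      obtain ⟨g1, hg1⟩ := ih1
      obtain ⟨g2, hg2⟩ := ih2
      refine ⟨g2 * g1, fun q hq => ?_⟩
      rw [PartialEquiv.trans_source] at hq
      have := hg2 _ hq.2
      simp only [PartialEquiv.trans_apply]
      rw [hg2 _ hq.2, hg1 _ hq.1, mul_assoc]
  | @inv f2 h ih =>
      obtain ⟨g, hg⟩ := ih
      refine ⟨g⁻¹, fun q hq => ?_⟩
      have hs : f2.symm q ∈ f2.source := f2.symm.map_source hq
      have := hg _ hs
      rw [f2.right_inv hq] at this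
      rw [this, inv_mul_cancel_left]

/-- every nonzero element of the left inverse hull of `P ⊆ G` acts by a
unique left translation: there is a unique `g ∈ G` with `f(q) = g q` for all `q ∈ dom f`. -/
theorem stmt12 {G : Type*} [Group G] (P : Submonoid G) :
    ∀ f : PartialEquiv P P, LeftHull P f → f.source.Nonempty →
      ∃! g : G, ∀ q ∈ f.source, ((f q : P) : G) = g * q := by
  intro f hf ⟨q, hq⟩
  obtain ⟨g, hg⟩ := leftHull_exists_translation P hf
  refine ⟨g, hg, fun g' hg' => ?_⟩
  have := (hg' q hq).symm.trans (hg q hq)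
  exact mul_right_cancel this
end

section
/- Let P be a submonoid of a group G and I_P^λ its left inverse hull. For each nonzero f ∈ I_P^λ let σ(f) denote the unique g ∈ G with f(q) = g q for all q ∈ dom f. Then the following are equivalent: (i) for every g ∈ G with g⁻¹P ∩ P ≠ ∅, the partial bijection α_g : g⁻¹P ∩ P → gP ∩ P, p ↦ gp, belongs to I_P^λ; (ii) every nonzero f ∈ I_P^λ lies beneath a unique maximal element of the set of nonzero elements of I_P^λ partially ordered by restriction, and σ is injective on the set of these maximal elements. -/
open Classical

/-- The order on partial bijections by restriction: `f ≤ f'` iff `dom f ⊆ dom f'` and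
`f'` agrees with `f` on `dom f`. -/
def Below {G : Type*} [Group G] {P : Submonoid G} (f f' : PartialEquiv P P) : Prop :=
  f.source ⊆ f'.source ∧ ∀ q ∈ f.source, f q = f' q

/-- `m` is a maximal element of the set of nonzero elements of the left inverse hull,
partially ordered by restriction (equality of partial bijections being equality of
graphs, i.e. mutual restriction). -/
def IsMaxHull {G : Type*} [Group G] (P : Submonoid G) (m : PartialEquiv P P) : Prop :=
  LeftHull P m ∧ m.source.Nonempty ∧
    ∀ f : PartialEquiv P P, LeftHull P f → f.source.Nonempty → Below m f → Below f m


section Aux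
variable {G : Type*} [Group G] {P : Submonoid G}

lemma hull_sigma {f : PartialEquiv P P} (hf : LeftHull P f) :
    ∃ g : G, ∀ q ∈ f.source, ((f q : P) : G) = g * q := by
  induction hf with
  | lam p => exact ⟨p, fun q _ => rfl⟩
  | zero => exact ⟨1, fun q hq => absurd hq (Set.notMem_empty _)⟩
  | @comp f1 f2 h1 h2 ih1 ih2 =>
    obtain ⟨g1, hg1⟩ := ih1; obtain ⟨g2, hg2⟩ := ih2
    refine ⟨g2 * g1, fun q hq => ?_⟩
    rw [PartialEquiv.trans_source] at hq
    rw [PartialEquiv.trans_apply, hg2 _ hq.2, hg1 _ hq.1, mul_assoc]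
  | @inv f h ih =>
    obtain ⟨g, hg⟩ := ih
    refine ⟨g⁻¹, fun q hq => ?_⟩
    have hq' : q ∈ f.target := by rwa [PartialEquiv.symm_source] at hq
    have h1 := hg (f.symm q) (f.map_target hq')
    rw [f.right_inv hq'] at h1
    rw [h1, inv_mul_cancel_left]

lemma below_trans {a b c : PartialEquiv P P} (h1 : Below a b) (h2 : Below b c) : Below a c :=
  ⟨h1.1.trans h2.1, fun q hq => (h1.2 q hq).trans (h2.2 q (h1.1 hq))⟩

lemma below_of_agree {f f' : PartialEquiv P P} {g : G}
    (hs : f.source ⊆ f'.source)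
    (h1 : ∀ q ∈ f.source, ((f q : P) : G) = g * q)
    (h2 : ∀ q ∈ f'.source, ((f' q : P) : G) = g * q) : Below f f' :=
  ⟨hs, fun q hq => Subtype.ext (by rw [h1 q hq, h2 q (hs hq)])⟩

lemma exists_seed (g : G) (q0 : P) (h0 : g * (q0 : G) ∈ P) :
    ∃ f : PartialEquiv P P, LeftHull P f ∧ q0 ∈ f.source ∧
      ∀ q ∈ f.source, ((f q : P) : G) = g * q := by
  set p : P := ⟨g * (q0 : G), h0⟩ with hp
  refine ⟨(lamPE P q0).symm.trans (lamPE P p),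
    LeftHull.comp (LeftHull.inv (LeftHull.lam q0)) (LeftHull.lam p), ?_, ?_⟩
  · rw [PartialEquiv.trans_source, PartialEquiv.symm_source]
    constructor
    · show ((q0 : G))⁻¹ * (q0 : G) ∈ P
      simpa using one_mem P
    · show (lamPE P q0).symm q0 ∈ (lamPE P p).source
      simp [lamPE]
  · intro q hq
    rw [PartialEquiv.trans_source, PartialEquiv.symm_source] at hq
    have hq1 : ((q0 : G))⁻¹ * (q : G) ∈ P := hq.1
    rw [PartialEquiv.trans_apply]
    have hsymm : (lamPE P q0).symm q = ⟨((q0 : G))⁻¹ * (q : G), hq1⟩ := by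
      show (lamPE P q0).invFun q = _
      exact dif_pos hq1
    rw [hsymm]
    show (p : G) * (((q0 : G))⁻¹ * (q : G)) = g * q
    rw [hp]
    group

end Aux

/-- for a submonoid `P` of a group `G`, the following are equivalent:
(i) for every `g ∈ G` with `g⁻¹P ∩ P ≠ ∅`, the partial bijection
`α_g : g⁻¹P ∩ P → gP ∩ P`, `p ↦ g p`, belongs to the left inverse hull `I_P^λ`;
(ii) every nonzero `f ∈ I_P^λ` lies beneath a unique maximal element of the nonzero part
of `I_P^λ` ordered by restriction, and the grading `σ` (where `σ(f)` is the unique group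
element by which `f` acts by left translation) is injective on maximal elements. -/
theorem stmt13 {G : Type*} [Group G] (P : Submonoid G) :
    (∀ g : G, {q : P | g * (q : G) ∈ P}.Nonempty →
      ∃ f : PartialEquiv P P, LeftHull P f ∧ f.source = {q : P | g * (q : G) ∈ P} ∧
        ∀ q ∈ f.source, ((f q : P) : G) = g * q) ↔
    ((∀ f : PartialEquiv P P, LeftHull P f → f.source.Nonempty →
        ∃ m : PartialEquiv P P, (IsMaxHull P m ∧ Below f m) ∧
          ∀ m' : PartialEquiv P P, IsMaxHull P m' → Below f m' →
            Below m' m ∧ Below m m') ∧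
      (∀ m m' : PartialEquiv P P, IsMaxHull P m → IsMaxHull P m' → ∀ g : G,
        (∀ q ∈ m.source, ((m q : P) : G) = g * q) →
        (∀ q ∈ m'.source, ((m' q : P) : G) = g * q) →
        Below m m' ∧ Below m' m)) := by
  constructor
  · intro hi
    have maxal : ∀ (g : G) (α : PartialEquiv P P), LeftHull P α →
        α.source = {q : P | g * (q : G) ∈ P} → α.source.Nonempty →
        (∀ q ∈ α.source, ((α q : P) : G) = g * q) → IsMaxHull P α := by
      intro g α hα hsrc hne hact
      refine ⟨hα, hne, ?_⟩
      intro f' hf' hne' hba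
      obtain ⟨g', hg'⟩ := hull_sigma hf'
      obtain ⟨q0, hq0⟩ := hne
      have hgg : g' = g := by
        have e1 := hg' q0 (hba.1 hq0)
        rw [← hba.2 q0 hq0, hact q0 hq0] at e1
        exact mul_right_cancel e1.symm
      subst hgg
      refine below_of_agree ?_ hg' hact
      intro q hq
      rw [hsrc]
      simp only [Set.mem_setOf_eq]
      rw [← hg' q hq]
      exact (f' q).2
    constructor
    · intro f hf hne
      obtain ⟨g, hg⟩ := hull_sigma hf
      have hSne : {q : P | g * (q : G) ∈ P}.Nonempty := by
        obtain ⟨q0, hq0⟩ := hne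
        refine ⟨q0, ?_⟩
        simp only [Set.mem_setOf_eq]
        rw [← hg q0 hq0]
        exact (f q0).2
      obtain ⟨α, hαhull, hαsrc, hαact⟩ := hi g hSne
      have hαne : α.source.Nonempty := by rw [hαsrc]; exact hSne
      have hαmax := maxal g α hαhull hαsrc hαne hαact
      have hfsub : f.source ⊆ α.source := by
        intro q hq
        rw [hαsrc]
        simp only [Set.mem_setOf_eq]
        rw [← hg q hq]
        exact (f q).2
      have hbfα : Below f α := below_of_agree hfsub hg hαact
      refine ⟨α, ⟨hαmax, hbfα⟩, ?_⟩
      intro m' hm' hbm'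
      obtain ⟨g', hg'⟩ := hull_sigma hm'.1
      obtain ⟨q0, hq0⟩ := hne
      have hgg : g' = g := by
        have e1 := hg' q0 (hbm'.1 hq0)
        rw [← hbm'.2 q0 hq0, hg q0 hq0] at e1
        exact mul_right_cancel e1.symm
      subst hgg
      have hsub' : m'.source ⊆ α.source := by
        intro q hq
        rw [hαsrc]
        simp only [Set.mem_setOf_eq]
        rw [← hg' q hq]
        exact (m' q).2
      have hb1 : Below m' α := below_of_agree hsub' hg' hαact
      exact ⟨hb1, hm'.2.2 α hαhull hαne hb1⟩
    · intro m m' hm hm' g hactm hactm'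
      have hSne : {q : P | g * (q : G) ∈ P}.Nonempty := by
        obtain ⟨q0, hq0⟩ := hm.2.1
        refine ⟨q0, ?_⟩
        simp only [Set.mem_setOf_eq]
        rw [← hactm q0 hq0]
        exact (m q0).2
      obtain ⟨α, hαhull, hαsrc, hαact⟩ := hi g hSne
      have hαne : α.source.Nonempty := by rw [hαsrc]; exact hSne
      have hsub1 : m.source ⊆ α.source := by
        intro q hq
        rw [hαsrc]
        simp only [Set.mem_setOf_eq]
        rw [← hactm q hq]
        exact (m q).2
      have hsub2 : m'.source ⊆ α.source := by
        intro q hq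
        rw [hαsrc]
        simp only [Set.mem_setOf_eq]
        rw [← hactm' q hq]
        exact (m' q).2
      have hb1 : Below m α := below_of_agree hsub1 hactm hαact
      have hb2 : Below m' α := below_of_agree hsub2 hactm' hαact
      have hb3 : Below α m := hm.2.2 α hαhull hαne hb1
      have hb4 : Below α m' := hm'.2.2 α hαhull hαne hb2
      exact ⟨below_trans hb1 hb4, below_trans hb2 hb3⟩
  · rintro ⟨h1, h2⟩ g hS
    obtain ⟨q0, hq0⟩ := hS
    obtain ⟨f, hfhull, hq0f, hfact⟩ := exists_seed g q0 hq0
    obtain ⟨m, ⟨hmmax, hbfm⟩, -⟩ := h1 f hfhull ⟨q0, hq0f⟩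
    obtain ⟨gm, hgm⟩ := hull_sigma hmmax.1
    have hgg : gm = g := by
      have e1 := hgm q0 (hbfm.1 hq0f)
      rw [← hbfm.2 q0 hq0f, hfact q0 hq0f] at e1
      exact (mul_right_cancel e1).symm
    rw [hgg] at hgm
    refine ⟨m, hmmax.1, ?_, hgm⟩
    apply Set.Subset.antisymm
    · intro q hq
      simp only [Set.mem_setOf_eq]
      rw [← hgm q hq]
      exact (m q).2
    · intro q1 hq1
      have hq1' : g * (q1 : G) ∈ P := hq1
      obtain ⟨f1, hf1hull, hq1f1, hf1act⟩ := exists_seed g q1 hq1'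
      obtain ⟨m1, ⟨hm1max, hbf1m1⟩, -⟩ := h1 f1 hf1hull ⟨q1, hq1f1⟩
      obtain ⟨g1, hg1⟩ := hull_sigma hm1max.1
      have hgg1 : g1 = g := by
        have e1 := hg1 q1 (hbf1m1.1 hq1f1)
        rw [← hbf1m1.2 q1 hq1f1, hf1act q1 hq1f1] at e1
        exact (mul_right_cancel e1).symm
      rw [hgg1] at hg1
      exact (h2 m m1 hmmax hm1max g hgm hg1).2.1 (hbf1m1.1 hq1f1)
end

section
/- Let E = (E⁰, E¹, s, r) be a directed graph, F the free group on the set E¹, and h : E* → F the map sending a vertex to 1 and a string of edges μ_n⋯μ_1 to the product of the corresponding generators. Define σ(μ,ν) = h(μ) h(ν)⁻¹ for (μ,ν) ∈ S_E ∖ {0}. Then σ(x y) = σ(x) σ(y) whenever x, y ∈ S_E ∖ {0} and x y ≠ 0; and if (μ,ν) and (μ',ν') are elements of S_E ∖ {0} such that μ ≠ ν, μ' ≠ ν', μ and ν have no common initial segment, μ' and ν' have no common initial segment, and σ(μ,ν) = σ(μ',ν'), then (μ,ν) = (μ',ν'). -/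
/-- Finite paths `μ_n ⋯ μ_1` in the directed graph with vertices `V`, edges `E` and
source/range maps `gs, gr : E → V`: `GPath gs gr a b` is the type of finite paths with
source `a` and range `b` (a single vertex being a path of length zero). -/
inductive GPath {V E : Type*} (gs gr : E → V) : V → V → Type _
  | nil (v : V) : GPath gs gr v v
  | cons {a b c : V} (p : GPath gs gr a b) (e : E) (h1 : gs e = b) (h2 : gr e = c) :
      GPath gs gr a c

/-- Concatenation of composable paths. -/
def GPath.comp {V E : Type*} {gs gr : E → V} :
    ∀ {a b c : V}, GPath gs gr a b → GPath gs gr b c → GPath gs gr a c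
  | _, _, _, p, .nil _ => p
  | _, _, _, p, .cons q e h1 h2 => .cons (p.comp q) e h1 h2

/-- The set `E^*` of all finite paths, bundled with their source and range. -/
def PathStar {V E : Type*} (gs gr : E → V) : Type _ := Σ a b : V, GPath gs gr a b

/-- `composes x y z` means that `x` and `y` are composable (the range of `x` is the source
of `y`) and `z` is the concatenation of `x` followed by `y` (i.e. `z = y x` in the string
notation `μ_n ⋯ μ_1`). -/
def composes {V E : Type*} {gs gr : E → V} (x y z : PathStar gs gr) : Prop :=
  ∃ (a b c : V) (p : GPath gs gr a b) (q : GPath gs gr b c),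
    x = ⟨a, b, p⟩ ∧ y = ⟨b, c, q⟩ ∧ z = ⟨a, c, p.comp q⟩

/-- `x` is a single vertex (a path of length zero). -/
def isVertexPath {V E : Type*} {gs gr : E → V} (x : PathStar gs gr) : Prop :=
  ∃ v : V, x = ⟨v, v, GPath.nil v⟩

/-- `μ` and `ν` have no common initial segment: there are no path `ρ` that is not a vertex
and paths `μ', ν'` with `μ = μ' ρ` and `ν = ν' ρ`. -/
def NoCommonInit {V E : Type*} {gs gr : E → V} (μ ν : PathStar gs gr) : Prop :=
  ¬ ∃ ρ μ' ν' : PathStar gs gr, ¬ isVertexPath ρ ∧ composes ρ μ' μ ∧ composes ρ ν' ν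

/-- The map `h : E^* → F` into the free group on the edge set, sending a vertex to `1` and
a string of edges to the product of the corresponding generators. -/
def hmap {V E : Type*} {gs gr : E → V} : ∀ {a b : V}, GPath gs gr a b → FreeGroup E
  | _, _, .nil _ => 1
  | _, _, .cons p e _ _ => FreeGroup.of e * hmap p

/-- `h` on bundled paths. -/
def hstar {V E : Type*} {gs gr : E → V} (x : PathStar gs gr) : FreeGroup E := hmap x.2.2

section Aux
variable {V E : Type*} {gs gr : E → V}

def GPath.toList : ∀ {a b : V}, GPath gs gr a b → List E
  | _, _, .nil _ => []
  | _, _, .cons p e _ _ => e :: p.toList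

def wordOf (x : PathStar gs gr) : List E := x.2.2.toList

lemma hmap_eq : ∀ {a b : V} (p : GPath gs gr a b),
    hmap p = FreeGroup.mk (p.toList.map (fun e => (e, true)))
  | _, _, .nil _ => by simp [hmap, GPath.toList, FreeGroup.one_eq_mk]
  | _, _, .cons p e _ _ => by
      rw [hmap, hmap_eq p, FreeGroup.of, FreeGroup.mul_mk]
      simp [GPath.toList]

lemma hstar_eq (x : PathStar gs gr) :
    hstar x = FreeGroup.mk ((wordOf x).map (fun e => (e, true))) := hmap_eq _

lemma hmap_comp : ∀ {a b c : V} (p : GPath gs gr a b) (q : GPath gs gr b c),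
    hmap (p.comp q) = hmap q * hmap p
  | _, _, _, p, .nil _ => by simp [GPath.comp, hmap]
  | _, _, _, p, .cons q e h1 h2 => by
      rw [GPath.comp, hmap, hmap, hmap_comp p q, mul_assoc]

lemma hstar_composes {x y z : PathStar gs gr} (h : composes x y z) :
    hstar z = hstar y * hstar x := by
  obtain ⟨a, b, c, p, q, rfl, rfl, rfl⟩ := h
  exact hmap_comp p q

lemma toList_comp : ∀ {a b c : V} (p : GPath gs gr a b) (q : GPath gs gr b c),
    (p.comp q).toList = q.toList ++ p.toList
  | _, _, _, p, .nil _ => by simp [GPath.comp, GPath.toList]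
  | _, _, _, p, .cons q e h1 h2 => by
      rw [GPath.comp, GPath.toList, GPath.toList, toList_comp p q, List.cons_append]

lemma eq_of_toList_eq {a : V} : ∀ {b : V} (p : GPath gs gr a b) {b' : V} (q : GPath gs gr a b'),
    p.toList = q.toList → (⟨a, b, p⟩ : PathStar gs gr) = ⟨a, b', q⟩ := by
  intro b p
  induction p with
  | nil =>
    intro b' q h
    cases q with
    | nil => rfl
    | cons q₀ f g1 g2 => simp [GPath.toList] at h
  | cons p₀ e h1 h2 ih =>
    intro b' q h
    cases q with
    | nil => simp [GPath.toList] at h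
    | cons q₀ f g1 g2 =>
      simp only [GPath.toList, List.cons.injEq] at h
      obtain ⟨rfl, hl⟩ := h
      have key := ih q₀ hl
      simp only [Sigma.mk.inj_iff, heq_eq_eq, true_and] at key
      obtain ⟨rfl, hpq⟩ := key
      obtain rfl := eq_of_heq hpq
      subst h2; subst g2
      rfl

lemma pathStar_eq {x y : PathStar gs gr} (h1 : x.1 = y.1) (h2 : wordOf x = wordOf y) :
    x = y := by
  obtain ⟨a, b, p⟩ := x
  obtain ⟨a', b', q⟩ := y
  dsimp at h1
  subst h1
  exact eq_of_toList_eq p q h2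

lemma wordOf_nil_eq {x : PathStar gs gr} (h : wordOf x = []) :
    x = ⟨x.1, x.1, GPath.nil x.1⟩ := by
  obtain ⟨a, b, p⟩ := x
  cases p with
  | nil => rfl
  | cons p₀ e h1 h2 => simp [wordOf, GPath.toList] at h

lemma split_first : ∀ {a b : V} (p : GPath gs gr a b) (e : E) (l : List E),
    p.toList = l ++ [e] →
    ∃ (h1 : gs e = a) (p' : GPath gs gr (gr e) b),
      p = (GPath.cons (GPath.nil a) e h1 rfl).comp p' := by
  intro a b p
  induction p with
  | nil => intro e l h; simp [GPath.toList] at h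
  | cons p₀ f h1 h2 ih =>
    intro e l h
    cases l with
    | nil =>
      simp only [GPath.toList, List.nil_append, List.cons.injEq] at h
      obtain ⟨rfl, h0⟩ := h
      cases p₀ with
      | nil =>
        subst h2
        exact ⟨h1, GPath.nil _, by simp [GPath.comp]⟩
      | cons => simp [GPath.toList] at h0
    | cons x l' =>
      simp only [GPath.toList, List.cons_append, List.cons.injEq] at h
      obtain ⟨rfl, h0⟩ := h
      obtain ⟨g1, p', rfl⟩ := ih e l' h0
      exact ⟨g1, GPath.cons p' f h1 h2, by simp [GPath.comp]⟩

/-- The single-edge bundled path. -/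
def edgePath (e : E) : PathStar gs gr := ⟨gs e, gr e, GPath.cons (GPath.nil _) e rfl rfl⟩

lemma edgePath_not_vertex (e : E) : ¬ isVertexPath (edgePath (gs := gs) (gr := gr) e) := by
  rintro ⟨v, hv⟩
  have := congrArg (fun x : PathStar gs gr => wordOf x) hv
  simp [edgePath, wordOf, GPath.toList] at this

lemma composes_edge {x : PathStar gs gr} {e : E} {l : List E} (h : wordOf x = l ++ [e]) :
    ∃ x' : PathStar gs gr, composes (edgePath e) x' x := by
  obtain ⟨a, b, p⟩ := x
  obtain ⟨h1, p', hp⟩ := split_first p e l h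
  subst h1
  exact ⟨⟨gr e, b, p'⟩, gs e, gr e, b, _, p', rfl, rfl, by rw [hp]⟩

lemma source_of_last {x : PathStar gs gr} {e : E} {l : List E} (h : wordOf x = l ++ [e]) :
    gs e = x.1 := by
  obtain ⟨a, b, p⟩ := x
  obtain ⟨h1, -, -⟩ := split_first p e l h
  exact h1

end Aux

section Words
variable {V E : Type*} {gs gr : E → V}

/-- No cancellation between adjacent letters. -/
def noCan (x y : E × Bool) : Prop := ¬(x.1 = y.1 ∧ x.2 = !y.2)

lemma reduce_eq_self [DecidableEq E] : ∀ {L : List (E × Bool)}, L.Chain' noCan →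
    FreeGroup.reduce L = L := by
  intro L h
  induction L with
  | nil => rfl
  | cons x t ih =>
    rw [FreeGroup.reduce.cons, ih h.tail]
    cases t with
    | nil => rfl
    | cons y ys =>
      have hx : ¬(x.1 = y.1 ∧ x.2 = !y.2) := (List.isChain_cons_cons.1 h).1
      exact if_neg hx

lemma chain'_const (l : List E) (b : Bool) : (l.map (fun e => (e, b))).Chain' noCan := by
  induction l with
  | nil => exact List.isChain_nil
  | cons e t ih =>
    cases t with
    | nil => exact List.isChain_singleton _
    | cons f t' =>
      refine List.isChain_cons_cons.2 ⟨?_, ih⟩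
      simp [noCan]

lemma sigma_word (μ ν : PathStar gs gr) :
    hstar μ * (hstar ν)⁻¹ =
      FreeGroup.mk ((wordOf μ).map (fun e => (e, true)) ++
        ((wordOf ν).map (fun e => (e, false))).reverse) := by
  rw [hstar_eq, hstar_eq, FreeGroup.inv_mk, FreeGroup.mul_mk]
  congr 1
  simp [FreeGroup.invRev, List.map_map, Function.comp_def]

lemma chain'_sigma {μ ν : PathStar gs gr} (hnc : NoCommonInit μ ν) :
    ((wordOf μ).map (fun e => (e, true)) ++
      ((wordOf ν).map (fun e => (e, false))).reverse).Chain' noCan := by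
  refine List.isChain_append.2 ⟨chain'_const _ _, ?_, ?_⟩
  · rw [← List.map_reverse]; exact chain'_const _ _
  · intro x hx y hy
    rcases List.eq_nil_or_concat (wordOf μ) with hnil | ⟨l, e, hl⟩
    · simp [hnil] at hx
    rcases List.eq_nil_or_concat (wordOf ν) with hnil' | ⟨l', e', hl'⟩
    · simp [hnil'] at hy
    rw [List.concat_eq_append] at hl
    rw [List.concat_eq_append] at hl'
    rw [List.head?_reverse] at hy
    rw [hl, List.map_append] at hx
    rw [hl', List.map_append] at hy
    simp only [List.map_cons, List.map_nil, List.getLast?_append, List.getLast?_singleton,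
      Option.or, Option.mem_def, Option.some.injEq] at hx hy
    subst hx
    subst hy
    rintro ⟨he, -⟩
    dsimp at he
    subst he
    obtain ⟨μ'', hcμ⟩ := composes_edge (x := μ) hl
    obtain ⟨ν'', hcν⟩ := composes_edge (x := ν) hl'
    exact hnc ⟨edgePath e, μ'', ν'', edgePath_not_vertex e, hcμ, hcν⟩

lemma takeWhile_dropWhile_split : ∀ (A B : List (E × Bool)),
    (∀ x ∈ A, x.2 = true) → (∀ x ∈ B, x.2 = false) →
    (A ++ B).takeWhile (fun x => x.2) = A ∧ (A ++ B).dropWhile (fun x => x.2) = B := by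
  intro A
  induction A with
  | nil =>
    intro B hA hB
    cases B with
    | nil => simp
    | cons y ys =>
      have hy := hB y (by simp)
      simp [List.takeWhile_cons, List.dropWhile_cons, hy]
  | cons x t ih =>
    intro B hA hB
    have hx := hA x (by simp)
    obtain ⟨ih1, ih2⟩ := ih B (fun z hz => hA z (by simp [hz])) hB
    simp [List.takeWhile_cons, List.dropWhile_cons, hx, ih1, ih2]

lemma append_bool_split {A1 B1 A2 B2 : List (E × Bool)}
    (hA1 : ∀ x ∈ A1, x.2 = true) (hB1 : ∀ x ∈ B1, x.2 = false)
    (hA2 : ∀ x ∈ A2, x.2 = true) (hB2 : ∀ x ∈ B2, x.2 = false)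
    (h : A1 ++ B1 = A2 ++ B2) : A1 = A2 ∧ B1 = B2 := by
  obtain ⟨t1, d1⟩ := takeWhile_dropWhile_split A1 B1 hA1 hB1
  obtain ⟨t2, d2⟩ := takeWhile_dropWhile_split A2 B2 hA2 hB2
  rw [h] at t1 d1
  exact ⟨t1.symm.trans t2, d1.symm.trans d2⟩

end Words

/-- with `σ(μ,ν) = h(μ) h(ν)⁻¹`, `σ` is multiplicative on nonzero products
in the graph inverse semigroup `S_E` (the two clauses covering the two cases
`ν = α ν'` and `α = ν α'` in which the product `(μ,ν)(α,β)` is nonzero), and `σ` is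
injective on the nonidempotent maximal elements, i.e. on the pairs `(μ,ν)` with
`μ ≠ ν` having no common initial segment. -/
theorem stmt14 {V E : Type*} (gs gr : E → V) :
    (∀ μ ν α β ν' ξ : PathStar gs gr, μ.1 = ν.1 → α.1 = β.1 →
      composes ν' α ν → composes ν' β ξ →
      hstar μ * (hstar ξ)⁻¹ = (hstar μ * (hstar ν)⁻¹) * (hstar α * (hstar β)⁻¹)) ∧
    (∀ μ ν α β α' ξ : PathStar gs gr, μ.1 = ν.1 → α.1 = β.1 →
      composes α' ν α → composes α' μ ξ →
      hstar ξ * (hstar β)⁻¹ = (hstar μ * (hstar ν)⁻¹) * (hstar α * (hstar β)⁻¹)) ∧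
    (∀ μ ν μ' ν' : PathStar gs gr, μ.1 = ν.1 → μ'.1 = ν'.1 → μ ≠ ν → μ' ≠ ν' →
      NoCommonInit μ ν → NoCommonInit μ' ν' →
      hstar μ * (hstar ν)⁻¹ = hstar μ' * (hstar ν')⁻¹ → μ = μ' ∧ ν = ν') := by
  refine ⟨?_, ?_, ?_⟩
  · intro μ ν α β ν' ξ _ _ hc1 hc2
    rw [hstar_composes hc1, hstar_composes hc2]
    group
  · intro μ ν α β α' ξ _ _ hc1 hc2
    rw [hstar_composes hc1, hstar_composes hc2]
    group
  · intro μ ν μ' ν' hsμν hsμ'ν' hne hne' hnc hnc' hσ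
    classical
    rw [sigma_word, sigma_word] at hσ
    have hred := FreeGroup.reduce.sound hσ
    rw [reduce_eq_self (chain'_sigma hnc), reduce_eq_self (chain'_sigma hnc')] at hred
    obtain ⟨hP, hN⟩ := append_bool_split (by simp) (by simp) (by simp) (by simp) hred
    have injT : Function.Injective (fun e : E => (e, true)) := by
      intro a b h; exact (Prod.mk.injEq _ _ _ _ ▸ h).1
    have injF : Function.Injective (fun e : E => (e, false)) := by
      intro a b h; exact (Prod.mk.injEq _ _ _ _ ▸ h).1
    have hwμ : wordOf μ = wordOf μ' := List.map_injective_iff.2 injT hP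
    have hwν : wordOf ν = wordOf ν' :=
      List.map_injective_iff.2 injF (List.reverse_injective hN)
    have hsrc : μ.1 = μ'.1 := by
      rcases List.eq_nil_or_concat (wordOf μ) with hnil | ⟨l, e, hl⟩
      · rcases List.eq_nil_or_concat (wordOf ν) with hnil' | ⟨l', e', hl'⟩
        · exact absurd (by rw [wordOf_nil_eq hnil, wordOf_nil_eq hnil', hsμν]) hne
        · rw [List.concat_eq_append] at hl'
          have s1 := source_of_last (x := ν) hl'
          have s2 := source_of_last (x := ν') (hwν ▸ hl')
          rw [hsμν, ← s1, s2, ← hsμ'ν']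
      · rw [List.concat_eq_append] at hl
        have s1 := source_of_last (x := μ) hl
        have s2 := source_of_last (x := μ') (hwμ ▸ hl)
        rw [← s1, s2]
    exact ⟨pathStar_eq hsrc hwμ, pathStar_eq (by rw [← hsμν, hsrc, hsμ'ν']) hwν⟩
end

section
/- Let T be a tiling of ℝⁿ, P ∈ M and t ∈ P. Let R be a nonempty patch with connected support and a, b ∈ R. If (a,R,a) ∼ (t,P,t) and (b,R,b) ∼ (t,P,t), then a = b. Consequently, any doubly pointed pattern class [a,R,b] with [a,R,a] = [b,R,b] = [t,P,t] is idempotent, so the isotropy group of the idempotent [t,P,t] under any grading of the connected tiling semigroup is trivial. -/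
open Set

/-- Points of `ℝⁿ`. -/
abbrev Euc (n : ℕ) : Type := EuclideanSpace ℝ (Fin n)

/-- A tile in `ℝⁿ`: a subset homeomorphic to the closed unit ball. -/
def IsTile {n : ℕ} (t : Set (Euc n)) : Prop :=
  Nonempty (t ≃ₜ (Metric.closedBall (0 : Euc n) 1))

/-- Translation of a subset of `ℝⁿ` by `x`. -/
def trS {n : ℕ} (x : Euc n) (t : Set (Euc n)) : Set (Euc n) := (fun y => y + x) '' t

/-- Translation of a collection of tiles by `x`. -/
def trP {n : ℕ} (x : Euc n) (P : Set (Set (Euc n))) : Set (Set (Euc n)) := trS x '' P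

/-- A partial tiling: a collection of tiles with pairwise disjoint interiors. -/
def IsPartialTiling {n : ℕ} (T : Set (Set (Euc n))) : Prop :=
  (∀ t ∈ T, IsTile t) ∧ ∀ t ∈ T, ∀ r ∈ T, t ≠ r → interior t ∩ interior r = ∅

/-- A patch: a finite partial tiling. -/
def IsPatch {n : ℕ} (P : Set (Set (Euc n))) : Prop := IsPartialTiling P ∧ P.Finite

/-- A tiling: a partial tiling with support all of `ℝⁿ`. -/
def IsTiling {n : ℕ} (T : Set (Set (Euc n))) : Prop := IsPartialTiling T ∧ ⋃₀ T = univ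

/-- `M`: the set of subpatches of the tiling `T` with connected support. -/
def Mpatch {n : ℕ} (T : Set (Set (Euc n))) : Set (Set (Set (Euc n))) :=
  {P | P ⊆ T ∧ P.Finite ∧ IsPreconnected (⋃₀ P)}

/-- The equivalence of doubly pointed patches: `(t₁,P,t₂) ∼ (r₁,Q,r₂)` iff some
translation carries `t₁` to `r₁`, `t₂` to `r₂` and `P` to `Q`. -/
def sim3 {n : ℕ} (x y : Set (Euc n) × Set (Set (Euc n)) × Set (Euc n)) : Prop :=
  ∃ v : Euc n, trS v x.1 = y.1 ∧ trS v x.2.2 = y.2.2 ∧ trP v x.2.1 = y.2.1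

/-- `mulRelT T x y z` means that in the connected tiling semigroup of `T` the product of
the classes of `x = (t₁,P,t₂)` and `y = (r₁,Q,r₂)` is nonzero and equals the class of
`z`: there are translations `v, w` with `P + v` and `Q + w` patches in `T`,
`t₂ + v = r₁ + w`, and `z ∼ (t₁ + v, (P + v) ∪ (Q + w), r₂ + w)`. -/
def mulRelT {n : ℕ} (T : Set (Set (Euc n)))
    (x y z : Set (Euc n) × Set (Set (Euc n)) × Set (Euc n)) : Prop :=
  ∃ v w : Euc n, trP v x.2.1 ⊆ T ∧ trP w y.2.1 ⊆ T ∧ trS v x.2.2 = trS w y.1 ∧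
    sim3 (trS v x.1, trP v x.2.1 ∪ trP w y.2.1, trS w y.2.2) z

/-- `x = (t₁,P,t₂)` represents an element of the connected tiling semigroup `S_T`:
`t₁, t₂ ∈ P` and `P` is congruent to a subpatch of `T` with connected support. -/
def InST {n : ℕ} (T : Set (Set (Euc n)))
    (x : Set (Euc n) × Set (Set (Euc n)) × Set (Euc n)) : Prop :=
  x.1 ∈ x.2.1 ∧ x.2.2 ∈ x.2.1 ∧ ∃ v : Euc n, trP v x.2.1 ∈ Mpatch T

lemma trS_trS {n : ℕ} (u v : Euc n) (s : Set (Euc n)) :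
    trS u (trS v s) = trS (v + u) s := by
  simp only [trS, image_image]
  exact image_congr fun y _ => add_assoc y v u

lemma trS_zero {n : ℕ} (s : Set (Euc n)) : trS 0 s = s := by
  simp [trS]

lemma trP_trP {n : ℕ} (u v : Euc n) (Q : Set (Set (Euc n))) :
    trP u (trP v Q) = trP (v + u) Q := by
  simp only [trP, image_image]
  exact image_congr fun s _ => trS_trS u v s

lemma trP_zero {n : ℕ} (Q : Set (Set (Euc n))) : trP 0 Q = Q := by
  simp [trP, trS_zero]

lemma sUnion_trP {n : ℕ} (u : Euc n) (Q : Set (Set (Euc n))) :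
    ⋃₀ trP u Q = trS u (⋃₀ Q) := by
  ext x
  simp only [trP, trS, sUnion_image, mem_iUnion, mem_image, mem_sUnion]
  constructor
  · rintro ⟨s, hs, y, hy, rfl⟩; exact ⟨y, ⟨s, hs, hy⟩, rfl⟩
  · rintro ⟨y, ⟨s, hs, hy⟩, rfl⟩; exact ⟨s, hs, y, hy, rfl⟩

lemma isCompact_of_tile {n : ℕ} {s : Set (Euc n)} (h : IsTile s) : IsCompact s := by
  obtain ⟨e⟩ := h
  have : CompactSpace (Metric.closedBall (0 : Euc n) 1) :=
    isCompact_iff_compactSpace.mp (isCompact_closedBall _ _)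
  have : CompactSpace s := e.symm.compactSpace
  exact isCompact_iff_compactSpace.mpr this

lemma nonempty_of_tile {n : ℕ} {s : Set (Euc n)} (h : IsTile s) : s.Nonempty := by
  obtain ⟨e⟩ := h
  have h1 : (Metric.closedBall (0 : Euc n) 1).Nonempty :=
    ⟨0, by simp⟩
  have : Nonempty (Metric.closedBall (0 : Euc n) 1) := h1.to_subtype
  have : Nonempty s := ⟨e.symm this.some⟩
  exact nonempty_coe_sort.mp this

lemma translation_fix {n : ℕ} {K : Set (Euc n)} (hK : IsCompact K) (hne : K.Nonempty)
    {u : Euc n} (h : trS u K = K) : u = 0 := by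
  have hcont : Continuous fun x : Euc n => (inner ℝ u x : ℝ) :=
    continuous_const.inner continuous_id
  obtain ⟨x0, hx0, hmax⟩ := hK.exists_isMaxOn hne hcont.continuousOn
  have hmem : x0 + u ∈ K := by
    rw [← h]; exact ⟨x0, hx0, rfl⟩
  have hle : (inner ℝ u (x0 + u) : ℝ) ≤ inner ℝ u x0 := hmax hmem
  rw [inner_add_right] at hle
  have h2 : (inner ℝ u u : ℝ) ≤ 0 := by linarith
  have h3 : (inner ℝ u u : ℝ) = 0 := le_antisymm h2 real_inner_self_nonneg
  exact inner_self_eq_zero.mp h3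

lemma trS_inj {n : ℕ} (v : Euc n) : Function.Injective (trS (n := n) v) := by
  intro s t h
  have := congrArg (trS (-v)) h
  rwa [trS_trS, trS_trS, add_neg_cancel, trS_zero, trS_zero] at this

/-- if `(a,R,a) ∼ (t,P,t)` and `(b,R,b) ∼ (t,P,t)` with `P ∈ M`, `t ∈ P`,
then `a = b`; consequently such a doubly pointed pattern class `[a,R,b]` is idempotent,
so for any grading `σ` of the connected tiling semigroup (a map constant on `∼`-classes
and multiplicative on nonzero products), `σ(a,R,b) = 1`: the isotropy group of the
idempotent `[t,P,t]` is trivial. -/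
theorem stmt19 {n : ℕ} (T : Set (Set (Euc n))) (hT : IsTiling T)
    (P : Set (Set (Euc n))) (hP : P ∈ Mpatch T) (t : Set (Euc n)) (ht : t ∈ P)
    (R : Set (Set (Euc n))) (a b : Set (Euc n))
    (hR0 : R.Nonempty) (hRp : IsPatch R) (hRc : IsPreconnected (⋃₀ R))
    (ha : a ∈ R) (hb : b ∈ R)
    (h1 : sim3 (a, R, a) (t, P, t)) (h2 : sim3 (b, R, b) (t, P, t)) :
    a = b ∧
    mulRelT T (a, R, b) (a, R, b) (a, R, b) ∧
    ∀ (G : Type) [Group G] (σ : Set (Euc n) × Set (Set (Euc n)) × Set (Euc n) → G),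
      (∀ x y, InST T x → InST T y → sim3 x y → σ x = σ y) →
      (∀ x y z, InST T x → InST T y → InST T z → mulRelT T x y z → σ z = σ x * σ y) →
      σ (a, R, b) = 1 := by
  obtain ⟨v, hv1, hv2, hv3⟩ := h1
  obtain ⟨w, hw1, hw2, hw3⟩ := h2
  simp only at hv1 hv2 hv3 hw1 hw2 hw3
  -- R is translated to itself by v - w
  have hfix : trP (v + -w) R = R := by
    have := congrArg (trP (-w)) (hv3.trans hw3.symm)
    rwa [trP_trP, trP_trP, add_neg_cancel, trP_zero] at this
  -- the support of R is compact and nonempty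
  have hcomp : IsCompact (⋃₀ R) := by
    refine hRp.2.isCompact_sUnion fun s hs => isCompact_of_tile (hRp.1.1 s hs)
  have hne : (⋃₀ R).Nonempty := by
    obtain ⟨s, hs⟩ := hR0
    obtain ⟨x, hx⟩ := nonempty_of_tile (hRp.1.1 s hs)
    exact ⟨x, s, hs, hx⟩
  have hvw : v = w := by
    have hKfix : trS (v + -w) (⋃₀ R) = ⋃₀ R := by
      rw [← sUnion_trP, hfix]
    have := translation_fix hcomp hne hKfix
    linear_combination (norm := module) this
  have hab : a = b := by
    apply trS_inj v
    rw [hv1, hvw, hw1]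
  -- idempotency
  have hmul : mulRelT T (a, R, b) (a, R, b) (a, R, b) := by
    refine ⟨v, v, ?_, ?_, ?_, -v, ?_, ?_, ?_⟩
    · simp only; rw [hv3]; exact hP.1
    · simp only; rw [hv3]; exact hP.1
    · simp only [hab]
    · simp only [trS_trS, add_neg_cancel, trS_zero]
    · simp only [trS_trS, add_neg_cancel, trS_zero]
    · simp only [union_self, trP_trP, add_neg_cancel, trP_zero]
  refine ⟨hab, hmul, ?_⟩
  intro G _ σ _ hm
  have hin : InST T (a, R, b) := ⟨ha, hb, v, hv3 ▸ hP⟩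
  have h := hm _ _ _ hin hin hin hmul
  have h' : σ (a, R, b) * 1 = σ (a, R, b) * σ (a, R, b) := by
    rw [mul_one]; exact h
  exact (mul_left_cancel h').symm
end
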